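/- arXiv:1807.01562 — 3 statements merged into one kernel-verified Lean document; each statement's English description precedes it below -/
import Mathlib

section
/- Uniqueness of the solution to the self-consistent equations: Assume |Re z̃| ≤ 2−κ and |z̃| ≤ κ⁻¹ for a constant κ > 0. There exists a constant c > 0 such that if ζ + ‖g‖_∞ + |z − z̃| ≤ c, then the solution vector ((M_ζ^g)_i(z, z̃))_{i∈Z_N} of the self-consistent equations (M_i)⁻¹ = −z·1_{i∈[1,W]} − z̃·1_{i∉[1,W]} − g_i − Σ_j (s_ζ)_ij M_j is unique among vectors satisfying max_i |M_i − m_sc(z̃ + i0⁺)| ≤ c. -/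
open MeasureTheory ProbabilityTheory Matrix Finset
open scoped Classical

noncomputable section

namespace RBM

/-- Integer representative of `x : Fin N` in `(-N/2, N/2]`. -/
def rep {N : ℕ} (x : Fin N) : ℤ :=
  if 2 * x.val ≤ N then (x.val : ℤ) else (x.val : ℤ) - N

/-- Periodic distance `|x|` on `ℤ_N`, as a real number. -/
def zdist {N : ℕ} (x : Fin N) : ℝ := |(rep x : ℝ)|

/-- The block of indices `⟦1, W⟧` inside `ℤ_N`. -/
def inBlock {N : ℕ} (W : ℕ) (i : Fin N) : Prop := 1 ≤ i.val ∧ i.val ≤ W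

/-- Band variance profile `s_{ij} = f(i-j)` with band width `W`. -/
structure IsBandProfile {N : ℕ} (W : ℕ) (cs Cs : ℝ) (f : Fin N → ℝ) : Prop where
  nonneg : ∀ x, 0 ≤ f x
  symm : ∀ i j : Fin N, f (i - j) = f (j - i)
  sum_one : ∑ x, f x = 1
  lower : ∀ x, zdist x ≤ W → cs / W ≤ f x
  upper : ∀ x, f x ≤ if zdist x ≤ Cs * W then Cs / W else 0

/-- Entries of the variance matrix `S_ζ`. -/
def sZeta {N : ℕ} (W : ℕ) (ζ : ℝ) (f : Fin N → ℝ) (i j : Fin N) : ℝ :=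
  f (i - j) - (if inBlock W i ∧ inBlock W j then ζ * (1 + if i = j then 1 else 0) / W else 0)

/-- The random band matrix ensemble `H_ζ`: real symmetric, centered independent entries with
variance profile `S_ζ`, and all moments controlled by the standard deviation. -/
structure IsBandEnsemble {N : ℕ} (W : ℕ) (cs Cs : ℝ) (μmom : ℕ → ℝ) (ζ : ℝ)
    {Ω : Type*} [MeasurableSpace Ω] (P : Measure Ω)
    (f : Fin N → ℝ) (H : Ω → Matrix (Fin N) (Fin N) ℝ) : Prop where
  profile : IsBandProfile W cs Cs f
  meas : ∀ i j, Measurable fun ω => H ω i j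
  symm : ∀ ω, (H ω).IsSymm
  indep : iIndepFun
    (fun (p : {p : Fin N × Fin N // p.1 ≤ p.2}) ω => H ω p.1.1 p.1.2) P
  centered : ∀ i j, ∫ ω, H ω i j ∂P = 0
  variance : ∀ i j, ∫ ω, (H ω i j) ^ 2 ∂P = sZeta W ζ f i j
  moment : ∀ (p : ℕ) (i j), ∫ ω, |H ω i j| ^ p ∂P ≤ μmom p ^ p * sZeta W ζ f i j ^ ((p : ℝ) / 2)

/-- The deterministic diagonal matrix with the two spectral parameters. -/
def Zmat {N : ℕ} (W : ℕ) (z zt : ℂ) : Matrix (Fin N) (Fin N) ℂ :=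
  Matrix.diagonal fun i => if inBlock W i then z else zt

/-- The generalized resolvent `G_ζ^g(z, z̃)` of `H_ζ - diag g`. -/
def resolvent {N : ℕ} (W : ℕ) (g : Fin N → ℝ) (H : Matrix (Fin N) (Fin N) ℝ)
    (z zt : ℂ) : Matrix (Fin N) (Fin N) ℂ :=
  ((H - Matrix.diagonal g).map (fun x => (x : ℂ)) - Zmat W z zt)⁻¹

/-- The `T`-matrix `T_{ij} = ∑_k (S_ζ)_{ik} |G_{kj}|²`. -/
def Tmat {N : ℕ} (W : ℕ) (ζ : ℝ) (f : Fin N → ℝ)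
    (G : Matrix (Fin N) (Fin N) ℂ) (i j : Fin N) : ℝ :=
  ∑ k, sZeta W ζ f i k * ‖G k j‖ ^ 2

/-- The self-consistent equation for the vector `M`. -/
def IsSCSolution {N : ℕ} (W : ℕ) (ζ : ℝ) (f : Fin N → ℝ) (g : Fin N → ℝ)
    (z zt : ℂ) (M : Fin N → ℂ) : Prop :=
  ∀ i, (M i)⁻¹ =
    -(if inBlock W i then z else zt) - (g i : ℂ) - ∑ j, (sZeta W ζ f i j : ℂ) * M j

/-- Stieltjes transform of the semicircle law (the branch mapping `ℂ⁺` to `ℂ⁺`). -/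
def msc (z : ℂ) : ℂ := z * (-1 + (1 - 4 / z ^ 2) ^ ((1 : ℂ) / 2)) / 2

/-- Boundary value `m_sc(z̃ + i·0⁺)` for `z̃ ∈ ℂ⁺ ∪ ℝ`. -/
def mscB (z : ℂ) : ℂ :=
  if 0 < z.im then msc z
  else (-z + Complex.I * (Real.sqrt (4 - z.re ^ 2) : ℝ)) / 2

/-- The σ-algebra generated by the matrix minor obtained by removing row and column `k`. -/
def minorSigma {N : ℕ} {Ω : Type*} [MeasurableSpace Ω]
    (H : Ω → Matrix (Fin N) (Fin N) ℝ) (k : Fin N) : MeasurableSpace Ω :=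
  MeasurableSpace.comap
    (fun ω (p : {p : Fin N × Fin N // p.1 ≠ k ∧ p.2 ≠ k}) => H ω p.1.1 p.1.2) inferInstance

/-- The matrix `1 - M² S_ζ` (with `M²` the diagonal matrix with entries `M_i²`). -/
def oneSubM2S {N : ℕ} (W : ℕ) (ζ : ℝ) (f : Fin N → ℝ) (M : Fin N → ℂ) :
    Matrix (Fin N) (Fin N) ℂ :=
  1 - (Matrix.diagonal fun i => (M i) ^ 2) * (Matrix.of fun i j => ((sZeta W ζ f i j : ℝ) : ℂ))

/-- The real matrix `1 - S_ζ |M|²` (with `|M|²` the diagonal matrix with entries `|M_j|²`). -/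
def oneSubSM2 {N : ℕ} (W : ℕ) (ζ : ℝ) (f : Fin N → ℝ) (M : Fin N → ℂ) :
    Matrix (Fin N) (Fin N) ℝ :=
  1 - (Matrix.of fun i j => sZeta W ζ f i j) * (Matrix.diagonal fun j => ‖M j‖ ^ 2)

/-- The `ℓ∞ → ℓ∞` operator norm of a complex matrix (maximal absolute row sum). -/
def rowSumNorm {N : ℕ} (A : Matrix (Fin N) (Fin N) ℂ) : ℝ := ⨆ i, ∑ j, ‖A i j‖

end RBM

open RBM


section AuxUnique

lemma abs_triangle_eq' {x y : ℂ} (hx : x ≠ 0)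
    (h : ‖x + y‖ = ‖x‖ + ‖y‖) :
    y = ((‖y‖ / ‖x‖ : ℝ) : ℂ) * x := by
  rcases eq_or_ne y 0 with rfl | hy
  · simp
  · have hax : (0:ℝ) < ‖x‖ := norm_pos_iff.mpr hx
    have hay : (0:ℝ) < ‖y‖ := norm_pos_iff.mpr hy
    have hsq := congrArg (· ^ 2) h
    simp only [add_sq] at hsq
    rw [Complex.sq_norm, Complex.sq_norm, Complex.sq_norm, Complex.normSq_add] at hsq
    have hre : (x * (starRingEnd ℂ) y).re = ‖x‖ * ‖y‖ := by nlinarith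
    set u := x * (starRingEnd ℂ) y with hu
    have hau : ‖u‖ = ‖x‖ * ‖y‖ := by
      rw [hu, norm_mul, Complex.norm_conj]
    have h1 : u.re ^ 2 + u.im ^ 2 = ‖u‖ ^ 2 := by
      rw [Complex.sq_norm, Complex.normSq_apply]; ring
    rw [hau, ← hre] at h1
    have him : u.im = 0 := by
      have : u.im ^ 2 = 0 := by linarith
      exact pow_eq_zero_iff (by norm_num) |>.mp this
    have hu_eq : u = ((‖x‖ * ‖y‖ : ℝ) : ℂ) := by
      apply Complex.ext <;> simp [hre, him]
    have hyy : (starRingEnd ℂ) y * y = (((‖y‖ : ℝ)) : ℂ)^2 := by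
      rw [mul_comm, Complex.mul_conj]
      exact_mod_cast (Complex.sq_norm y).symm
    have key : x * (((‖y‖ : ℝ)) : ℂ)^2 = ((‖x‖ * ‖y‖ : ℝ):ℂ) * y := by
      calc x * (((‖y‖ : ℝ)) : ℂ)^2 = x * ((starRingEnd ℂ) y * y) := by rw [hyy]
        _ = u * y := by rw [hu]; ring
        _ = _ := by rw [hu_eq]
    have haxC : ((‖x‖ : ℝ) : ℂ) ≠ 0 := by simpa using hax.ne'
    have hayC : ((‖y‖ : ℝ) : ℂ) ≠ 0 := by simpa using hay.ne'
    have hprodC : ((‖x‖ * ‖y‖ : ℝ) : ℂ) ≠ 0 := by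
      push_cast; exact mul_ne_zero haxC hayC
    apply mul_left_cancel₀ hprodC
    rw [← key]
    push_cast
    field_simp

lemma sum_align' {N : ℕ} (c : Fin N → ℂ) (i₀ : Fin N) (h0 : c i₀ ≠ 0)
    (h : ‖∑ j, c j‖ = ∑ j, ‖c j‖) :
    ∑ j, c j = (((∑ j, ‖c j‖) / ‖c i₀‖ : ℝ) : ℂ) * c i₀ := by
  classical
  have hpair : ∀ j, c j = ((‖c j‖ / ‖c i₀‖ : ℝ) : ℂ) * c i₀ := by
    intro j
    rcases eq_or_ne j i₀ with rfl | hj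
    · rw [div_self (norm_pos_iff.mpr h0).ne']
      simp
    · apply abs_triangle_eq' h0
      have hjmem : j ∈ Finset.univ.erase i₀ := by simp [hj]
      set S := (Finset.univ.erase i₀).erase j with hS
      have e1 : c i₀ + ∑ x ∈ Finset.univ.erase i₀, c x = ∑ x, c x :=
        Finset.add_sum_erase _ c (Finset.mem_univ i₀)
      have e2 : c j + ∑ x ∈ S, c x = ∑ x ∈ Finset.univ.erase i₀, c x :=
        Finset.add_sum_erase _ c hjmem
      have a1 : ‖c i₀‖ + ∑ x ∈ Finset.univ.erase i₀, ‖c x‖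
          = ∑ x, ‖c x‖ :=
        Finset.add_sum_erase _ (fun x => ‖c x‖) (Finset.mem_univ i₀)
      have a2 : ‖c j‖ + ∑ x ∈ S, ‖c x‖
          = ∑ x ∈ Finset.univ.erase i₀, ‖c x‖ :=
        Finset.add_sum_erase _ (fun x => ‖c x‖) hjmem
      have hS_le : ‖∑ x ∈ S, c x‖ ≤ ∑ x ∈ S, ‖c x‖ :=
        norm_sum_le _ _
      have htot : ∑ x, ‖c x‖
          ≤ ‖c i₀ + c j‖ + ∑ x ∈ S, ‖c x‖ := by
        calc ∑ x, ‖c x‖ = ‖∑ x, c x‖ := h.symm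
          _ = ‖(c i₀ + c j) + ∑ x ∈ S, c x‖ := by
              rw [← e1, ← e2]; ring_nf
          _ ≤ ‖c i₀ + c j‖ + ‖∑ x ∈ S, c x‖ :=
              norm_add_le _ _
          _ ≤ _ := by linarith
      have hle : ‖c i₀ + c j‖ ≤ ‖c i₀‖ + ‖c j‖ :=
        norm_add_le _ _
      have : ‖c i₀‖ + ‖c j‖ ≤ ‖c i₀ + c j‖ := by
        linarith
      linarith
  calc ∑ j, c j = ∑ j, ((‖c j‖ / ‖c i₀‖ : ℝ) : ℂ) * c i₀ :=
        Finset.sum_congr rfl (fun j _ => hpair j)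
    _ = _ := by
        rw [← Finset.sum_mul]
        congr 1
        push_cast
        rw [← Finset.sum_div]

lemma rep_bounds' {N : ℕ} (x : Fin N) : -(N:ℤ) < 2 * rep x ∧ 2 * rep x ≤ N ∧
    (rep x = (x.val : ℤ) ∨ rep x = (x.val : ℤ) - N) := by
  have hx := x.isLt
  unfold rep
  split <;> rename_i h <;> omega

lemma zdist_le_of_block' {N W : ℕ} (i j : Fin N)
    (hi : inBlock W i) (hj : inBlock W j) : zdist (i - j) ≤ W := by
  obtain ⟨hi1, hi2⟩ := hi
  obtain ⟨hj1, hj2⟩ := hj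
  have hiN := i.isLt
  have hjN := j.isLt
  set x := i - j with hx
  have hxval : x.val = (N - j.val + i.val) % N := by
    rw [hx, Fin.sub_def]
  have ht : x.val = N - j.val + i.val ∨ x.val = N - j.val + i.val - N := by
    rcases Nat.lt_or_ge (N - j.val + i.val) N with h | h
    · left; rw [hxval, Nat.mod_eq_of_lt h]
    · right; rw [hxval, Nat.mod_eq_sub_mod h, Nat.mod_eq_of_lt (by omega)]
  obtain ⟨hb1, hb2, hb3⟩ := rep_bounds' x
  have key : -(W:ℤ) ≤ rep x ∧ rep x ≤ W := by omega
  rw [zdist, abs_le]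
  constructor
  · exact_mod_cast key.1
  · exact_mod_cast key.2

lemma zdist_sub_self' {N : ℕ} (i : Fin N) : zdist (i - i) = 0 := by
  have h : (i - i).val = 0 := by
    rw [Fin.sub_def]
    simp [Nat.sub_add_cancel i.isLt.le]
  rw [zdist, rep, h]
  simp

end AuxUnique

set_option maxHeartbeats 2000000 in
lemma mscB_bounds (κ : ℝ) (hκ : 0 < κ) (hκ2 : κ ≤ 2) (zt : ℂ)
    (him : 0 ≤ zt.im) (hre : |zt.re| ≤ 2 - κ) (habs : ‖zt‖ ≤ κ⁻¹) :
    Real.sqrt (κ^3/18) ≤ (mscB zt).im ∧ ‖mscB zt‖ ≤ 2 := by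
  by_cases hlt : 0 < zt.im
  · -- interior case
    have hz0 : zt ≠ 0 := by
      intro h; rw [h] at hlt; simp at hlt
    have hz2 : zt^2 ≠ 0 := pow_ne_zero _ hz0
    set w : ℂ := 1 - 4 / zt^2 with hw_def
    have hw0 : w ≠ 0 := by
      intro hcon
      have hz24 : zt^2 = 4 := by
        rw [hw_def] at hcon
        field_simp at hcon
        linear_combination hcon
      have h1 := congrArg Complex.im hz24
      have h2 := congrArg Complex.re hz24
      simp [pow_two, Complex.mul_im, Complex.mul_re] at h1 h2
      have hre0 : zt.re = 0 := by
        rcases mul_eq_zero.mp (by linarith : zt.re * zt.im = 0) with h | h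
        · exact h
        · exact absurd h (ne_of_gt hlt)
      rw [hre0] at h2
      nlinarith [hlt]
    set s : ℂ := (1 - 4 / zt ^ 2) ^ ((1:ℂ)/2) with hs_def
    have hs_exp : s = Complex.exp (Complex.log w * ((1:ℂ)/2)) := by
      rw [hs_def, ← hw_def]; exact Complex.cpow_def_of_ne_zero hw0 _
    have hs2 : s^2 = w := by
      rw [hs_exp, sq, ← Complex.exp_add,
        show Complex.log w * ((1:ℂ)/2) + Complex.log w * ((1:ℂ)/2) = Complex.log w by ring]
      exact Complex.exp_log hw0
    have hres : 0 ≤ s.re := by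
      rw [hs_exp, Complex.exp_re]
      apply mul_nonneg (Real.exp_nonneg _)
      apply Real.cos_nonneg_of_mem_Icc
      have him_eq : (Complex.log w * ((1:ℂ)/2)).im = w.arg / 2 := by
        simp [Complex.mul_im, Complex.log_im]
        ring
      rw [him_eq]
      constructor
      · have := Complex.neg_pi_lt_arg w; linarith
      · have := Complex.arg_le_pi w; linarith
    have hm_def : mscB zt = msc zt := by rw [mscB, if_pos hlt]
    set m : ℂ := msc zt with hm
    have hm_eq : m = zt * (-1 + s) / 2 := by rw [hm, msc, hs_def]
    set mt : ℂ := -(zt * (1 + s)) / 2 with hmt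
    have hprod : m * mt = 1 := by
      have key : zt^2 * (1 - s^2) = 4 := by
        rw [hs2, hw_def]
        field_simp
        ring
      rw [hm_eq, hmt]
      field_simp
      linear_combination key
    have hsum : m + mt = -zt := by rw [hm_eq, hmt]; ring
    have hm0 : m ≠ 0 := by
      intro h; rw [h, zero_mul] at hprod; exact one_ne_zero hprod.symm
    have habs_prod : ‖m‖ * ‖mt‖ = 1 := by
      rw [← norm_mul, hprod]; simp
    have habs_le : ‖m‖ ≤ ‖mt‖ := by
      have hns : Complex.normSq (-1 + s) ≤ Complex.normSq (1 + s) := by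
        simp only [Complex.normSq_apply, Complex.add_re, Complex.add_im, Complex.neg_re,
          Complex.one_re, Complex.one_im, Complex.neg_im]
        nlinarith [hres]
      have h1 : ‖-1 + s‖ ≤ ‖1 + s‖ := by
        rw [Complex.norm_def, Complex.norm_def]
        exact Real.sqrt_le_sqrt hns
      rw [hm_eq, hmt, norm_div, norm_div, norm_mul, norm_neg, norm_mul]
      gcongr
    have habs_m : ‖m‖ ≤ 1 := by
      nlinarith [norm_nonneg m, norm_nonneg mt]
    have hminv : m⁻¹ = -zt - m := by
      have : mt = -zt - m := by linear_combination hsum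
      rw [← this]; exact (eq_inv_of_mul_eq_one_right hprod).symm
    set a : ℝ := m.re with ha
    set b : ℝ := m.im with hb
    set r : ℝ := Complex.normSq m with hr
    have hr_pos : 0 < r := Complex.normSq_pos.mpr hm0
    have hr_def : r = a*a + b*b := Complex.normSq_apply m
    have hzre : zt.re = -(a + a/r) := by
      have : zt = -m - m⁻¹ := by rw [hminv]; ring
      rw [this]
      simp [Complex.sub_re, Complex.neg_re, Complex.inv_re, ← ha, ← hr]
      ring
    have hzim : zt.im = -b + b/r := by
      have : zt = -m - m⁻¹ := by rw [hminv]; ring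
      rw [this]
      simp [Complex.sub_im, Complex.neg_im, Complex.inv_im, ← hb, ← hr]
      ring
    have hr1 : r ≤ 1 := by
      rw [hr, ← Complex.sq_norm]
      nlinarith [norm_nonneg m]
    have hrlt : r < 1 := by
      rcases lt_or_eq_of_le hr1 with h | h
      · exact h
      · exfalso
        rw [h] at hzim
        rw [div_one] at hzim
        simp at hzim
        rw [hzim] at hlt
        simp at hlt
    have hb_pos : 0 < b := by
      have h1 : b * (1 - r) = zt.im * r := by
        rw [hzim, add_mul, div_mul_cancel₀ _ hr_pos.ne']
        ring
      nlinarith [hlt, hr_pos, hrlt]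
    have hr_lb : κ^2/9 ≤ r := by
      have hmt_le : ‖mt‖ ≤ κ⁻¹ + 1 := by
        have : mt = -zt - m := by linear_combination hsum
        rw [this]
        calc ‖-zt - m‖ = ‖zt + m‖ := by
              rw [show -zt - m = -(zt + m) by ring, norm_neg]
          _ ≤ ‖zt‖ + ‖m‖ := norm_add_le _ _
          _ ≤ κ⁻¹ + 1 := add_le_add habs habs_m
      have h1 : 1 ≤ ‖m‖ * (κ⁻¹ + 1) := by
        calc (1:ℝ) = ‖m‖ * ‖mt‖ := habs_prod.symm
          _ ≤ ‖m‖ * (κ⁻¹ + 1) := by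
              apply mul_le_mul_of_nonneg_left hmt_le (norm_nonneg m)
      have hk3 : (κ⁻¹ + 1) * κ = 1 + κ := by field_simp
      have h2 : κ/3 ≤ ‖m‖ := by
        nlinarith [norm_nonneg m]
      rw [hr, ← Complex.sq_norm]
      nlinarith
    have ha_bound : |a| * (1 + r) ≤ (2 - κ) * r := by
      have h1 : |a * (1+r) / r| ≤ 2 - κ := by
        rw [show a * (1+r)/r = -zt.re by rw [hzre]; field_simp; ring]
        rwa [abs_neg]
      rw [abs_div, abs_mul, abs_of_pos hr_pos, abs_of_pos (by linarith : (0:ℝ) < 1 + r)] at h1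
      calc |a| * (1+r) = |a| * (1+r) / r * r := by field_simp
        _ ≤ (2-κ) * r := by
            apply mul_le_mul_of_nonneg_right h1 hr_pos.le
    have hb2 : κ^3/18 ≤ b^2 := by
      have hsq := mul_self_le_mul_self (by positivity : (0:ℝ) ≤ |a| * (1+r)) ha_bound
      have ha2 : a^2 * (1+r)^2 ≤ (2-κ)^2 * r^2 := by
        nlinarith [sq_abs a, hsq]
      have h4r : 4*r ≤ (1+r)^2 := by nlinarith [sq_nonneg (1-r)]
      have ha2' : a^2 * (4*r) ≤ (2-κ)^2 * r^2 := by
        nlinarith [sq_nonneg a]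
      have ha2'' : a^2 ≤ (2-κ)^2 * r / 4 := by
        nlinarith [hr_pos]
      have hbr : b^2 = r - a^2 := by rw [hr_def]; ring
      rw [hbr]
      have e1 : r - a^2 ≥ r * (4*κ - κ^2)/4 := by nlinarith [ha2'']
      have hpos4 : (0:ℝ) ≤ 4*κ - κ^2 := by nlinarith
      have e2 : (κ^2/9)*(4*κ - κ^2) ≤ r * (4*κ - κ^2) :=
        mul_le_mul_of_nonneg_right hr_lb hpos4
      have e3 : κ^3/18 ≤ (κ^2/9)*(4*κ-κ^2)/4 := by
        nlinarith [mul_nonneg (pow_pos hκ 3).le (by linarith : (0:ℝ) ≤ 2-κ)]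
      linarith
    constructor
    · rw [hm_def, ← hb]
      calc Real.sqrt (κ^3/18) ≤ Real.sqrt (b^2) := Real.sqrt_le_sqrt hb2
        _ = b := Real.sqrt_sq hb_pos.le
    · rw [hm_def]; exact habs_m.trans (by norm_num)
  · -- boundary case: zt.im = 0
    have him0 : zt.im = 0 := le_antisymm (not_lt.mp hlt) him
    have hE2 : zt.re ^ 2 ≤ (2 - κ)^2 := by
      have := abs_nonneg zt.re
      nlinarith [sq_abs zt.re]
    have h4E : (0:ℝ) ≤ 4 - zt.re^2 := by nlinarith
    have hmeq : mscB zt = (-zt + Complex.I * ((Real.sqrt (4 - zt.re ^ 2) : ℝ) : ℂ)) / 2 := by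
      rw [mscB, if_neg hlt]
    constructor
    · have him_eq : (mscB zt).im = Real.sqrt (4 - zt.re^2) / 2 := by
        rw [hmeq]
        simp [Complex.div_im, Complex.add_im, Complex.neg_im, him0, Complex.mul_im]
      rw [him_eq]
      have key : κ^3/18 ≤ (4 - zt.re^2)/4 := by nlinarith
      calc Real.sqrt (κ^3/18) ≤ Real.sqrt ((4 - zt.re^2)/4) := Real.sqrt_le_sqrt key
        _ = Real.sqrt (4 - zt.re^2) / 2 := by
            rw [show (4 - zt.re^2)/4 = (Real.sqrt (4 - zt.re^2)/2)^2 by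
              rw [div_pow, Real.sq_sqrt h4E]; norm_num]
            exact Real.sqrt_sq (by positivity)
    · rw [hmeq]
      rw [norm_div]
      have h2 : ‖(2:ℂ)‖ = 2 := by norm_num
      rw [h2]
      have hR : Real.sqrt (4 - zt.re^2) ≤ 2 := by
        rw [show (2:ℝ) = Real.sqrt (2^2) by rw [Real.sqrt_sq]; norm_num]
        apply Real.sqrt_le_sqrt; nlinarith
      have habs_zt : ‖zt‖ ≤ 2 - κ := by
        calc ‖zt‖ ≤ |zt.re| + |zt.im| := Complex.norm_le_abs_re_add_abs_im zt
          _ = |zt.re| := by rw [him0]; simp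
          _ ≤ 2 - κ := hre
      have : ‖-zt + Complex.I * ((Real.sqrt (4 - zt.re ^ 2) : ℝ) : ℂ)‖
          ≤ ‖-zt‖ + ‖Complex.I * ((Real.sqrt (4 - zt.re ^ 2) : ℝ) : ℂ)‖ :=
        norm_add_le _ _
      have hIabs : ‖Complex.I * ((Real.sqrt (4 - zt.re ^ 2) : ℝ) : ℂ)‖
          = Real.sqrt (4 - zt.re^2) := by
        rw [norm_mul, Complex.norm_I, one_mul, Complex.norm_real, Real.norm_eq_abs, abs_of_nonneg (Real.sqrt_nonneg _)]
      rw [norm_neg] at this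
      linarith [this, hIabs ▸ this]

set_option maxHeartbeats 2000000 in
/-- **Uniqueness of the solution to the self-consistent equations** (Lemma 1.3, uniqueness
part): if `ζ + ‖g‖_∞ + |z - z̃| ≤ c`, then the solution of the self-consistent equations is
unique among vectors with `max_i |M_i - m_sc(z̃ + i0⁺)| ≤ c`. -/
theorem sc_uniqueness (cs Cs κ : ℝ) (hcs : 0 < cs) (hCs : 0 < Cs) (hκ : 0 < κ) :
    ∃ c > 0, ∀ (N W : ℕ), 0 < W →
    ∀ f : Fin N → ℝ, IsBandProfile W cs Cs f →
    ∀ (ζ : ℝ) (g : Fin N → ℝ) (z zt : ℂ),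
    0 ≤ ζ → 0 ≤ z.im → 0 ≤ zt.im →
    |zt.re| ≤ 2 - κ → ‖zt‖ ≤ κ⁻¹ →
    ζ + (⨆ i, |g i|) + ‖z - zt‖ ≤ c →
    ∀ M M' : Fin N → ℂ,
    IsSCSolution W ζ f g z zt M → (∀ i, ‖M i - mscB zt‖ ≤ c) →
    IsSCSolution W ζ f g z zt M' → (∀ i, ‖M' i - mscB zt‖ ≤ c) →
    M = M' := by
  set h₀ : ℝ := Real.sqrt (κ^3/18) with hh₀_def
  have hh₀ : 0 < h₀ := Real.sqrt_pos.mpr (by positivity)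
  refine ⟨min (cs/4) (min 1 (min (h₀/2) (h₀^2/10))), ?_, ?_⟩
  · have h1 : (0:ℝ) < cs/4 := by linarith
    have h2 : (0:ℝ) < h₀/2 := by linarith
    have h3 : (0:ℝ) < h₀^2/10 := by positivity
    exact lt_min h1 (lt_min one_pos (lt_min h2 h3))
  set c : ℝ := min (cs/4) (min 1 (min (h₀/2) (h₀^2/10))) with hc_def
  intro N W hW f hf ζ g z zt hζ hzim hztim hre habs hsmall M M' hM hMc hM' hM'c
  have hc1 : c ≤ cs/4 := min_le_left _ _
  have hc2 : c ≤ 1 := (min_le_right _ _).trans (min_le_left _ _)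
  have hc3 : c ≤ h₀/2 := (min_le_right _ _).trans ((min_le_right _ _).trans (min_le_left _ _))
  have hc4 : c ≤ h₀^2/10 := (min_le_right _ _).trans ((min_le_right _ _).trans (min_le_right _ _))
  have hκ2 : κ ≤ 2 := by have := abs_nonneg zt.re; linarith
  rcases Nat.eq_zero_or_pos N with hN | hN
  · subst hN
    funext i
    exact absurd i.isLt (by omega)
  have hWpos : (0:ℝ) < W := by exact_mod_cast hW
  have hgsup : 0 ≤ ⨆ i, |g i| := Real.iSup_nonneg (fun i => abs_nonneg _)
  have hζc : ζ ≤ c := by have := norm_nonneg (z - zt); linarith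
  obtain ⟨hm_im, hm_abs⟩ := mscB_bounds κ hκ hκ2 zt hztim hre habs
  set m : ℂ := mscB zt with hm_def
  -- variance entries
  have hζ2 : ∀ (P : Prop) [Decidable P], ζ * (1 + if P then (1:ℝ) else 0) ≤ cs/2 := by
    intro P _
    have h1 : (1 + if P then (1:ℝ) else 0) ≤ 2 := by split <;> norm_num
    have : ζ * (1 + if P then (1:ℝ) else 0) ≤ ζ * 2 :=
      mul_le_mul_of_nonneg_left h1 hζ
    linarith
  have hhalf : cs/2/W < cs/W := by
    apply (div_lt_div_iff_of_pos_right hWpos).mpr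
    linarith
  have hs_nonneg : ∀ i j, 0 ≤ sZeta W ζ f i j := by
    intro i j
    rw [sZeta]
    split
    case isTrue h =>
      have hzd := zdist_le_of_block' i j h.1 h.2
      have hlow := hf.lower _ hzd
      have h2 : ζ * (1 + if i = j then (1:ℝ) else 0) / W ≤ cs/2/W :=
        (div_le_div_iff_of_pos_right hWpos).mpr (hζ2 _)
      linarith
    case isFalse h => simpa using hf.nonneg _
  have hs_diag : ∀ i : Fin N, 0 < sZeta W ζ f i i := by
    intro i
    have hzd : zdist (i - i) ≤ W := by
      rw [zdist_sub_self']
      positivity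
    have hlow := hf.lower _ hzd
    rw [sZeta]
    split
    case isTrue h =>
      have h2 : ζ * (1 + if i = i then (1:ℝ) else 0) / W ≤ cs/2/W :=
        (div_le_div_iff_of_pos_right hWpos).mpr (hζ2 _)
      have hcspos : 0 < cs/2/W := by positivity
      linarith
    case isFalse h =>
      have : 0 < cs/W := by positivity
      linarith
  -- imaginary parts of solutions are bounded below
  have hIm_lb : ∀ (Mv : Fin N → ℂ), (∀ i, ‖Mv i - m‖ ≤ c) →
      ∀ i, h₀/2 ≤ (Mv i).im := by
    intro Mv hMv i
    have h1 := (abs_le.mp ((Complex.abs_im_le_norm (Mv i - m)).trans (hMv i))).1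
    simp only [Complex.sub_im] at h1
    linarith
  have hMim := hIm_lb M hMc
  have hM'im := hIm_lb M' hM'c
  have hMne : ∀ i, M i ≠ 0 := by
    intro i h
    have := hMim i
    rw [h] at this
    simp at this
    linarith
  have hM'ne : ∀ i, M' i ≠ 0 := by
    intro i h
    have := hM'im i
    rw [h] at this
    simp at this
    linarith
  -- the imaginary-part identity
  have hImId : ∀ (Mv : Fin N → ℂ), IsSCSolution W ζ f g z zt Mv → (∀ i, Mv i ≠ 0) → ∀ i,
      (Mv i).im = Complex.normSq (Mv i) *
        ((if inBlock W i then z else zt).im + ∑ j, sZeta W ζ f i j * (Mv j).im) := by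
    intro Mv hsc hne i
    have h := congrArg Complex.im (hsc i)
    rw [Complex.inv_im] at h
    have hrhs : (-(if inBlock W i then z else zt) - (g i : ℂ)
        - ∑ j, (sZeta W ζ f i j : ℂ) * Mv j).im
        = -((if inBlock W i then z else zt).im + ∑ j, sZeta W ζ f i j * (Mv j).im) := by
      rw [Complex.sub_im, Complex.sub_im, Complex.neg_im, Complex.ofReal_im, Complex.im_sum]
      simp only [Complex.im_ofReal_mul]
      ring
    rw [hrhs] at h
    have hns : Complex.normSq (Mv i) ≠ 0 := Complex.normSq_pos.mpr (hne i) |>.ne'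
    field_simp at h
    linarith [h]
  -- final contradiction setup
  by_contra hMM
  have hvne : ∃ j, M j - M' j ≠ 0 := by
    by_contra hall
    push_neg at hall
    exact hMM (funext fun j => sub_eq_zero.mp (hall j))
  obtain ⟨j₀, hj₀⟩ := hvne
  haveI : Nonempty (Fin N) := ⟨⟨0, hN⟩⟩
  set v : Fin N → ℂ := fun j => M j - M' j with hv
  set d : Fin N → ℝ := fun j => ‖v j‖ with hd
  set aa : Fin N → ℝ := fun j => (M j).im with haa
  set bb : Fin N → ℝ := fun j => (M' j).im with hbb
  have haapos : ∀ j, 0 < aa j := fun j => lt_of_lt_of_le (by linarith) (hMim j)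
  have hbbpos : ∀ j, 0 < bb j := fun j => lt_of_lt_of_le (by linarith) (hM'im j)
  set wgt : Fin N → ℝ := fun j => Real.sqrt (aa j * bb j) with hwgt
  have hwgt_pos : ∀ j, 0 < wgt j := fun j => Real.sqrt_pos.mpr (mul_pos (haapos j) (hbbpos j))
  set u : Fin N → ℝ := fun j => d j / wgt j with hu
  obtain ⟨i₀, hi₀⟩ := Finite.exists_max u
  set U : ℝ := u i₀ with hU
  have hd_nonneg : ∀ j, 0 ≤ d j := fun j => norm_nonneg _
  have hU_pos : 0 < U := by
    have h1 : 0 < u j₀ := div_pos (norm_pos_iff.mpr hj₀) (hwgt_pos j₀)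
    exact lt_of_lt_of_le h1 (hi₀ j₀)
  have hdw : ∀ j, d j = wgt j * u j := by
    intro j
    rw [hu]
    simp only
    rw [mul_comm]
    exact (div_mul_cancel₀ _ (hwgt_pos j).ne').symm
  -- K1 : the difference equation
  have hK1 : ∀ i, v i = M i * M' i * ∑ j, (sZeta W ζ f i j : ℂ) * v j := by
    intro i
    have hsub : (M i)⁻¹ - (M' i)⁻¹ = -∑ j, (sZeta W ζ f i j : ℂ) * v j := by
      rw [hM i, hM' i]
      have : ∀ j, (sZeta W ζ f i j : ℂ) * v j
          = (sZeta W ζ f i j : ℂ) * M j - (sZeta W ζ f i j : ℂ) * M' j := by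
        intro j; rw [hv]; ring
      rw [Finset.sum_congr rfl (fun j _ => this j), Finset.sum_sub_distrib]
      ring
    have h1 : M i * M' i * (M' i)⁻¹ = M i := mul_inv_cancel_right₀ (hM'ne i) (M i)
    have h2 : M i * M' i * (M i)⁻¹ = M' i := by
      rw [mul_comm (M i) (M' i)]
      exact mul_inv_cancel_right₀ (hMne i) (M' i)
    have e3 : M i * M' i * (-((M i)⁻¹ - (M' i)⁻¹)) = v i := by
      rw [neg_sub, mul_sub, h1, h2, hv]
    rw [← e3, hsub]
    ring
  -- quantities at the maximizing index
  set si : Fin N → ℝ := fun j => sZeta W ζ f i₀ j with hsi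
  set A : ℝ := ∑ j, si j * aa j with hA
  set B : ℝ := ∑ j, si j * bb j with hB
  set T : ℝ := ∑ j, si j * d j with hT
  set SW : ℝ := ∑ j, si j * wgt j with hSW
  set Sv : ℂ := ∑ j, (si j : ℂ) * v j with hSv
  have hA_nonneg : 0 ≤ A :=
    Finset.sum_nonneg fun j _ => mul_nonneg (hs_nonneg i₀ j) (haapos j).le
  have hB_nonneg : 0 ≤ B :=
    Finset.sum_nonneg fun j _ => mul_nonneg (hs_nonneg i₀ j) (hbbpos j).le
  set p : ℝ := ‖M i₀‖ with hp
  set q : ℝ := ‖M' i₀‖ with hq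
  have hp_pos : 0 < p := norm_pos_iff.mpr (hMne i₀)
  have hq_pos : 0 < q := norm_pos_iff.mpr (hM'ne i₀)
  have hdi : d i₀ = p * q * ‖Sv‖ := by
    rw [hd]
    simp only
    rw [hK1 i₀, norm_mul, norm_mul]
  have hF2 : ‖Sv‖ ≤ T := by
    rw [hSv, hT]
    calc ‖∑ j, (si j:ℂ) * v j‖ ≤ ∑ j, ‖(si j:ℂ) * v j‖ :=
          norm_sum_le _ _
      _ = ∑ j, si j * d j := by
          apply Finset.sum_congr rfl
          intro j _
          rw [norm_mul, Complex.norm_real, Real.norm_eq_abs, abs_of_nonneg (hs_nonneg i₀ j)]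
  have hF3 : T ≤ U * SW := by
    rw [hT, hSW, Finset.mul_sum]
    apply Finset.sum_le_sum
    intro j _
    rw [hdw j]
    have h1 : u j ≤ U := hi₀ j
    have := mul_le_mul_of_nonneg_left h1 (mul_nonneg (hs_nonneg i₀ j) (hwgt_pos j).le)
    calc si j * (wgt j * u j) = si j * wgt j * u j := by ring
      _ ≤ si j * wgt j * U := mul_le_mul_of_nonneg_left h1 (mul_nonneg (hs_nonneg i₀ j) (hwgt_pos j).le)
      _ = U * (si j * wgt j) := by ring
  have hF4 : SW ≤ Real.sqrt (A * B) := by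
    have h1 : ∀ j, si j * wgt j = Real.sqrt (si j * aa j) * Real.sqrt (si j * bb j) := by
      intro j
      rw [← Real.sqrt_mul (mul_nonneg (hs_nonneg i₀ j) (haapos j).le),
        show si j * aa j * (si j * bb j) = (si j)^2 * (aa j * bb j) by ring,
        Real.sqrt_mul (sq_nonneg _), Real.sqrt_sq (hs_nonneg i₀ j), hwgt]
    have h2 : SW^2 ≤ A * B := by
      rw [hSW, Finset.sum_congr rfl (fun j _ => h1 j)]
      have h3 := Finset.sum_mul_sq_le_sq_mul_sq Finset.univ
        (fun j => Real.sqrt (si j * aa j)) (fun j => Real.sqrt (si j * bb j))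
      have h4 : ∀ j, (Real.sqrt (si j * aa j))^2 = si j * aa j :=
        fun j => Real.sq_sqrt (mul_nonneg (hs_nonneg i₀ j) (haapos j).le)
      have h5 : ∀ j, (Real.sqrt (si j * bb j))^2 = si j * bb j :=
        fun j => Real.sq_sqrt (mul_nonneg (hs_nonneg i₀ j) (hbbpos j).le)
      rw [Finset.sum_congr rfl (fun j _ => h4 j), Finset.sum_congr rfl (fun j _ => h5 j)] at h3
      exact h3
    have hSW_nonneg : 0 ≤ SW :=
      Finset.sum_nonneg fun j _ => mul_nonneg (hs_nonneg i₀ j) (hwgt_pos j).le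
    calc SW = Real.sqrt (SW^2) := (Real.sqrt_sq hSW_nonneg).symm
      _ ≤ Real.sqrt (A * B) := Real.sqrt_le_sqrt h2
  have hzhat : 0 ≤ (if inBlock W i₀ then z else zt).im := by split <;> assumption
  have hF5a : Complex.normSq (M i₀) * A ≤ aa i₀ := by
    have h1 := hImId M hM hMne i₀
    have h2 : aa i₀ = Complex.normSq (M i₀) * ((if inBlock W i₀ then z else zt).im + A) := by
      simp only [haa, hA, hsi, haa]
      exact h1
    rw [h2]
    exact mul_le_mul_of_nonneg_left (by linarith) (Complex.normSq_nonneg _)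
  have hF5b : Complex.normSq (M' i₀) * B ≤ bb i₀ := by
    have h1 := hImId M' hM' hM'ne i₀
    have h2 : bb i₀ = Complex.normSq (M' i₀) * ((if inBlock W i₀ then z else zt).im + B) := by
      simp only [hbb, hB, hsi]
      exact h1
    rw [h2]
    exact mul_le_mul_of_nonneg_left (by linarith) (Complex.normSq_nonneg _)
  have hF6 : p * q * Real.sqrt (A * B) ≤ wgt i₀ := by
    have hlhs_nonneg : 0 ≤ p * q * Real.sqrt (A * B) := by positivity
    have h6 : (p * q * Real.sqrt (A * B))^2 ≤ aa i₀ * bb i₀ := by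
      have e1 : (p * q * Real.sqrt (A * B))^2
          = (Complex.normSq (M i₀) * A) * (Complex.normSq (M' i₀) * B) := by
        rw [mul_pow, mul_pow, Real.sq_sqrt (mul_nonneg hA_nonneg hB_nonneg),
          hp, hq, Complex.sq_norm, Complex.sq_norm]
        ring
      rw [e1]
      exact mul_le_mul hF5a hF5b
        (mul_nonneg (Complex.normSq_nonneg _) hB_nonneg) (haapos i₀).le
    calc p * q * Real.sqrt (A * B) = Real.sqrt ((p * q * Real.sqrt (A * B))^2) :=
          (Real.sqrt_sq hlhs_nonneg).symm
      _ ≤ Real.sqrt (aa i₀ * bb i₀) := Real.sqrt_le_sqrt h6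
      _ = wgt i₀ := by rw [hwgt]
  -- the squeeze
  have hdU : d i₀ = U * wgt i₀ := by rw [hdw i₀, hU]; ring
  have hchain1 : d i₀ ≤ p * q * T := by
    rw [hdi]
    exact mul_le_mul_of_nonneg_left hF2 (by positivity)
  have hchain2 : p * q * T ≤ U * wgt i₀ := by
    calc p * q * T ≤ p * q * (U * SW) :=
          mul_le_mul_of_nonneg_left hF3 (by positivity)
      _ = U * (p * q * SW) := by ring
      _ ≤ U * (p * q * Real.sqrt (A * B)) := by
          apply mul_le_mul_of_nonneg_left _ hU_pos.le
          exact mul_le_mul_of_nonneg_left hF4 (by positivity)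
      _ ≤ U * wgt i₀ := mul_le_mul_of_nonneg_left hF6 hU_pos.le
  have heq1 : p * q * ‖Sv‖ = p * q * T := by
    rw [← hdi]
    apply le_antisymm
    · rw [hdi]; exact mul_le_mul_of_nonneg_left hF2 (by positivity)
    · rw [hdU]
      exact hchain2
  have habsSv : ‖Sv‖ = T := mul_left_cancel₀ (by positivity) heq1
  -- alignment
  set cv : Fin N → ℂ := fun j => (si j : ℂ) * v j with hcv
  have hT_eq : T = ∑ j, ‖cv j‖ := by
    rw [hT]
    apply Finset.sum_congr rfl
    intro j _
    rw [hcv]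
    simp only
    rw [norm_mul, Complex.norm_real, Real.norm_eq_abs, abs_of_nonneg (hs_nonneg i₀ j), hd]
  have hvi₀ : v i₀ ≠ 0 := by
    intro h
    have hz : d i₀ = 0 := by rw [hd]; simp only; rw [h]; simp
    have h0 : 0 < U * wgt i₀ := mul_pos hU_pos (hwgt_pos i₀)
    linarith only [hz, hdU, h0]
  have hcv0 : cv i₀ ≠ 0 := by
    rw [hcv]
    simp only
    apply mul_ne_zero _ hvi₀
    simp only [ne_eq, Complex.ofReal_eq_zero]
    exact (hs_diag i₀).ne'
  have hsum_eq : ‖∑ j, cv j‖ = ∑ j, ‖cv j‖ := by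
    rw [show (∑ j, cv j) = Sv by rw [hSv, hcv], habsSv, hT_eq]
  have halign := sum_align' cv i₀ hcv0 hsum_eq
  have hT_pos : 0 < T := by
    rw [hdU] at hchain1
    have h0 : 0 < U * wgt i₀ := mul_pos hU_pos (hwgt_pos i₀)
    have h2 : 0 < p * q := mul_pos hp_pos hq_pos
    nlinarith only [hchain1, h0, h2]
  set ρ : ℝ := (∑ j, ‖cv j‖) / ‖cv i₀‖ with hρ
  have hρ_pos : 0 < ρ := by
    rw [hρ, ← hT_eq]
    exact div_pos hT_pos (norm_pos_iff.mpr hcv0)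
  -- conclude M i₀ * M' i₀ is a positive real
  have hSv_eq : Sv = ((ρ : ℝ) : ℂ) * ((si i₀ : ℝ) : ℂ) * v i₀ := by
    have h1 : Sv = ∑ j, cv j := by rw [hSv]
    have h2 : cv i₀ = ((si i₀ : ℝ) : ℂ) * v i₀ := by rw [hcv]
    rw [h1, halign, h2]
    ring
  have hsum_id : (∑ j, (sZeta W ζ f i₀ j : ℂ) * v j) = Sv := by
    rw [hSv]
  have hveq : v i₀ = M i₀ * M' i₀ * (((ρ * si i₀ : ℝ) : ℝ) : ℂ) * v i₀ := by
    conv_lhs => rw [hK1 i₀]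
    rw [hsum_id, hSv_eq]
    push_cast
    ring
  have hPQ : M i₀ * M' i₀ * ((ρ * si i₀ : ℝ) : ℂ) = 1 := by
    have h2 : (M i₀ * M' i₀ * (((ρ * si i₀ : ℝ)) : ℂ) - 1) * v i₀ = 0 := by
      rw [sub_mul, one_mul, ← hveq]
      ring
    rcases mul_eq_zero.mp h2 with h | h
    · exact sub_eq_zero.mp h
    · exact absurd h hvi₀
  -- M i₀ * M' i₀ is a positive real number: contradiction with m² far from ℝ₊
  have hc_nonneg : 0 ≤ c := le_trans hζ hζc
  have hτ_pos : 0 < ρ * si i₀ := mul_pos hρ_pos (hs_diag i₀)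
  have hPQ_eq : M i₀ * M' i₀ = (((ρ * si i₀)⁻¹ : ℝ) : ℂ) := by
    rw [Complex.ofReal_inv]
    exact eq_inv_of_mul_eq_one_left (by rw [mul_comm] at hPQ ⊢; exact hPQ)
  have him0 : (M i₀ * M' i₀).im = 0 := by
    rw [hPQ_eq]
    exact Complex.ofReal_im _
  have hre0 : 0 < (M i₀ * M' i₀).re := by
    rw [hPQ_eq, Complex.ofReal_re]
    exact inv_pos.mpr hτ_pos
  have habsP : ‖M i₀‖ ≤ 3 := by
    calc ‖M i₀‖ = ‖m + (M i₀ - m)‖ := by ring_nf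
      _ ≤ ‖m‖ + ‖M i₀ - m‖ := norm_add_le _ _
      _ ≤ 2 + c := add_le_add hm_abs (hMc i₀)
      _ ≤ 3 := by linarith only [hc2]
  have hdiff : ‖M i₀ * M' i₀ - m^2‖ ≤ 5*c := by
    have e : M i₀ * M' i₀ - m^2 = M i₀ * (M' i₀ - m) + m * (M i₀ - m) := by ring
    rw [e]
    calc ‖M i₀ * (M' i₀ - m) + m * (M i₀ - m)‖
        ≤ ‖M i₀ * (M' i₀ - m)‖ + ‖m * (M i₀ - m)‖ :=
          norm_add_le _ _
      _ = ‖M i₀‖ * ‖M' i₀ - m‖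
          + ‖m‖ * ‖M i₀ - m‖ := by
          rw [norm_mul, norm_mul]
      _ ≤ 3 * c + 2 * c := by
          apply add_le_add
          · exact mul_le_mul habsP (hM'c i₀) (norm_nonneg _) (by norm_num)
          · exact mul_le_mul hm_abs (hMc i₀) (norm_nonneg _) (by norm_num)
      _ = 5*c := by ring
  have h_im2 : |(m^2).im| ≤ 5*c := by
    have e : (m^2).im = -((M i₀ * M' i₀ - m^2).im) := by
      rw [Complex.sub_im, him0]; ring
    rw [e, abs_neg]
    exact (Complex.abs_im_le_norm _).trans hdiff
  have h_re2 : -(5*c) ≤ (m^2).re := by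
    have h1 := (abs_le.mp ((Complex.abs_re_le_norm (M i₀ * M' i₀ - m^2)).trans hdiff)).2
    rw [Complex.sub_re] at h1
    linarith only [h1, hre0]
  have him_re_eq : (m^2).re = m.re^2 - m.im^2 := by
    rw [sq, Complex.mul_re]; ring
  have him_im_eq : (m^2).im = 2*m.re*m.im := by
    rw [sq, Complex.mul_im]; ring
  have him_m : h₀ ≤ m.im := hm_im
  have h5c : 5*c ≤ h₀^2/2 := by linarith only [hc4]
  have him2 : h₀^2 ≤ m.im^2 := by nlinarith only [him_m, hh₀.le]
  have hx : 4*(m.re^2)*(m.im^2) ≤ 25*c^2 := by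
    obtain ⟨hl, hr⟩ := abs_le.mp h_im2
    have h2 := sq_le_sq' hl hr
    rw [him_im_eq] at h2
    nlinarith only [h2]
  have hc25 : 25*c^2 ≤ h₀^4/4 := by
    have h1 := mul_self_le_mul_self (by linarith : (0:ℝ) ≤ 5*c) h5c
    nlinarith only [h1]
  have hre2 : m.re^2 ≤ h₀^2/16 := by
    have h3 : 4*(m.re^2)*(h₀^2) ≤ 4*(m.re^2)*(m.im^2) :=
      mul_le_mul_of_nonneg_left him2 (by positivity)
    have h4 : 4*(m.re^2)*(h₀^2) ≤ h₀^4/4 := by linarith only [h3, hx, hc25]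
    nlinarith only [h4, mul_pos hh₀ hh₀, sq_nonneg m.re]
  rw [him_re_eq] at h_re2
  have hh2 : 0 < h₀^2 := by positivity
  linarith only [h_re2, hre2, him2, h5c, hh2]
end
end

section
/- Contraction bound for the linearized self-consistent operator: Assume |Re z̃| ≤ 2−κ for a constant κ > 0 and set m := m_sc(z̃ + i0⁺). For any fixed τ > 0 there is a constant c₁ > 0 such that ‖ ( (m²S₀ + τ)/(1 + τ) )² ‖_{ℓ∞→ℓ∞} < 1 − c₁, where S₀ is the matrix with entries s_ij and m²S₀ denotes the matrix with entries m²·s_ij. -/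
open MeasureTheory ProbabilityTheory Matrix Finset
open scoped Classical

noncomputable section

set_option maxHeartbeats 1000000

namespace CAux
open RBM Finset

lemma sqrt_le_sub {A B : ℝ} (hB : 0 ≤ B) (hBA : B ≤ A^2) (hA : 0 ≤ A) :
    Real.sqrt (A^2 - B) ≤ A - B/(2*A) := by
  rcases eq_or_lt_of_le hA with h0 | h0
  · have hB0 : B = 0 := le_antisymm (by nlinarith) hB
    simp [← h0, hB0]
  · have hrhs : 0 ≤ A - B/(2*A) := by
      rw [sub_nonneg, div_le_iff₀ (by linarith)]
      nlinarith
    have hexp : (A - B/(2*A))^2 = A^2 - B + (B/(2*A))^2 := by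
      field_simp
      ring
    rw [Real.sqrt_le_left hrhs, hexp]
    nlinarith [sq_nonneg (B/(2*A))]

lemma normSq_quad (u : ℂ) (c ψ : ℝ) :
    Complex.normSq (u*u*(c:ℂ) + (ψ:ℂ)*u)
      = c^2*(u.re^2+u.im^2)^2 + 2*ψ*c*u.re*(u.re^2+u.im^2) + ψ^2*(u.re^2+u.im^2) := by
  simp [Complex.normSq_apply, Complex.mul_re, Complex.mul_im, Complex.add_re, Complex.add_im]
  ring

lemma key_pointwise (m : ℂ) (τ δ c φ D : ℝ) (hτ : 0 < τ) (hδ0 : 0 ≤ δ) (hδ1 : δ ≤ 1)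
    (hm : ‖m‖ ≤ 1) (hr : (m^2).re ≤ 1 - δ)
    (hc : 0 ≤ c) (hφ : 0 ≤ φ) (hD : 0 < D) (hcD : c ≤ D) (hφD : φ ≤ D) :
    ‖m^4 * (c:ℂ) + 2*(τ:ℂ)*m^2*(φ:ℂ)‖ ≤ c + 2*τ*φ - (2*τ*δ/((1+2*τ)*D)) * (c*φ) := by
  have hE : m^4 * (c:ℂ) + 2*(τ:ℂ)*m^2*(φ:ℂ) = (m^2)*(m^2)*(c:ℂ) + ((2*τ*φ : ℝ):ℂ)*(m^2) := by
    push_cast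
    ring
  rw [hE]
  set u := m^2 with hu
  set a := u.re with ha
  set b := u.im with hb
  set s := a^2 + b^2 with hsdef
  have hs0 : 0 ≤ s := by positivity
  have hs1 : s ≤ 1 := by
    have hn : Complex.normSq m ≤ 1 := by
      rw [← Complex.sq_norm]
      nlinarith [norm_nonneg m]
    have h2 : s = Complex.normSq (m^2) := by rw [hsdef, Complex.normSq_apply, ha, hb, hu]; ring
    rw [h2, map_pow]
    nlinarith [Complex.normSq_nonneg m]
  have hexp := normSq_quad u c (2*τ*φ)
  rw [← ha, ← hb, ← hsdef] at hexp
  have has : a*s ≤ 1 - δ := by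
    rcases le_or_gt a 0 with h | h
    · nlinarith
    · nlinarith
  have hstep1 : Complex.normSq (u*u*(c:ℂ) + ((2*τ*φ:ℝ):ℂ)*u)
      ≤ (c + 2*τ*φ)^2 - 4*τ*δ*(c*φ) := by
    rw [hexp]
    have h1 : 0 ≤ c^2*(1-s^2) := mul_nonneg (sq_nonneg c) (by nlinarith)
    have h2 : 0 ≤ (2*τ*φ)^2*(1-s) := mul_nonneg (sq_nonneg _) (by linarith)
    have h3 : 0 ≤ 4*τ*(c*φ)*((1-δ) - a*s) :=
      mul_nonneg (by positivity) (by linarith)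
    nlinarith [h1, h2, h3]
  have habs : ‖u*u*(c:ℂ) + ((2*τ*φ:ℝ):ℂ)*u‖
      ≤ Real.sqrt ((c + 2*τ*φ)^2 - 4*τ*δ*(c*φ)) := by
    rw [Complex.norm_def]
    exact Real.sqrt_le_sqrt hstep1
  have hApos : 0 ≤ c + 2*τ*φ := by positivity
  have hBle : 4*τ*δ*(c*φ) ≤ (c + 2*τ*φ)^2 := by
    nlinarith [mul_nonneg (mul_nonneg hτ.le (sub_nonneg.mpr hδ1)) (mul_nonneg hc hφ),
      sq_nonneg c, sq_nonneg (2*τ*φ)]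
  have hB0 : 0 ≤ 4*τ*δ*(c*φ) := by positivity
  refine habs.trans ((sqrt_le_sub hB0 hBle hApos).trans ?_)
  have hgoal : (2*τ*δ/((1+2*τ)*D)) * (c*φ) ≤ 4*τ*δ*(c*φ)/(2*(c + 2*τ*φ)) := by
    rcases eq_or_lt_of_le hApos with h0 | h0
    · have hc0 : c = 0 := by nlinarith
      simp [hc0]
    · rw [div_mul_eq_mul_div, div_le_div_iff₀ (by positivity) (by positivity)]
      have hle : c + 2*τ*φ ≤ (1+2*τ)*D := by nlinarith
      have h4 : 0 ≤ 4*τ*δ*(c*φ) := by positivity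
      nlinarith [mul_le_mul_of_nonneg_left hle h4]
  linarith

lemma re_cpow_half_nonneg (w : ℂ) : 0 ≤ (w ^ ((1:ℂ)/2)).re := by
  rcases eq_or_ne w 0 with h | h
  · rw [h, Complex.zero_cpow (by norm_num)]
    simp
  · rw [Complex.cpow_def_of_ne_zero h, Complex.exp_re]
    apply mul_nonneg (Real.exp_nonneg _)
    apply Real.cos_nonneg_of_mem_Icc
    have harg := Complex.arg_mem_Ioc w
    have him : (Complex.log w * ((1:ℂ)/2)).im = w.arg / 2 := by
      simp [Complex.mul_im, Complex.log_im]
      ring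
    rw [him]
    constructor
    · have := harg.1
      linarith
    · have := harg.2
      linarith

lemma sq_cpow_half (w : ℂ) : (w ^ ((1:ℂ)/2))^2 = w := by
  rcases eq_or_ne w 0 with h | h
  · rw [h, Complex.zero_cpow (by norm_num)]
    ring
  · rw [sq, ← Complex.cpow_add _ _ h]
    norm_num

lemma abs_sub_one_le (s : ℂ) (hre : 0 ≤ s.re) :
    ‖s - 1‖ ≤ ‖s + 1‖ := by
  have h : Complex.normSq (s-1) ≤ Complex.normSq (s+1) := by
    simp [Complex.normSq_apply, Complex.add_re, Complex.add_im, Complex.sub_re, Complex.sub_im]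
    nlinarith
  have := Real.sqrt_le_sqrt h
  rwa [← Complex.norm_def, ← Complex.norm_def] at this

lemma msc_abs_le {z : ℂ} (hz : z ≠ 0) : ‖msc z‖ ≤ 1 := by
  set s := (1 - 4 / z ^ 2) ^ ((1:ℂ)/2) with hs
  have hre : 0 ≤ s.re := re_cpow_half_nonneg _
  have hsq : s^2 = 1 - 4/z^2 := sq_cpow_half _
  have h1 : ‖s-1‖ * ‖s+1‖ = ‖4/z^2‖ := by
    rw [← norm_mul]
    have h1a : (s-1)*(s+1) = -(4/z^2) := by
      have : (s-1)*(s+1) = s^2 - 1 := by ring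
      rw [this, hsq]
      ring
    rw [h1a, norm_neg]
  have h2 : ‖s-1‖^2 ≤ ‖4/z^2‖ := by
    rw [← h1]
    have := abs_sub_one_le s hre
    nlinarith [norm_nonneg (s-1)]
  have habs4 : ‖4/z^2‖ = 4 / (‖z‖)^2 := by
    rw [norm_div, norm_pow]
    norm_num
  have hmsc : ‖msc z‖ = ‖z‖ * ‖s-1‖ / 2 := by
    unfold msc
    rw [← hs]
    rw [norm_div, norm_mul]
    have : (-1 + s) = s - 1 := by ring
    rw [this]
    norm_num
  rw [hmsc]
  rw [habs4] at h2
  have hzpos : 0 < ‖z‖ := norm_pos_iff.mpr hz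
  rw [div_le_one (by norm_num)]
  have h2' : (‖z‖ * ‖s-1‖)^2 ≤ 4 := by
    have h3 := mul_le_mul_of_nonneg_left h2 (sq_nonneg (‖z‖))
    have h4 : ‖z‖^2 * (4 / ‖z‖^2) = 4 := by field_simp
    calc (‖z‖ * ‖s-1‖)^2 = ‖z‖^2 * ‖s-1‖^2 := by ring
    _ ≤ ‖z‖^2 * (4/‖z‖^2) := h3
    _ = 4 := h4
  nlinarith [mul_nonneg (norm_nonneg z) (norm_nonneg (s-1))]

lemma msc_quadratic {z : ℂ} (hz : z ≠ 0) : (msc z)^2 + z * msc z + 1 = 0 := by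
  set s := (1 - 4 / z ^ 2) ^ ((1:ℂ)/2) with hs
  have hsq : s^2 = 1 - 4/z^2 := sq_cpow_half _
  have hs2 : z^2 * s^2 = z^2 - 4 := by
    rw [hsq]
    field_simp
  unfold msc
  rw [← hs]
  linear_combination hs2 / 4

lemma msc_re_bound {κ : ℝ} (hκ : 0 < κ) (hκ2 : κ ≤ 2) {z m : ℂ}
    (hquad : m^2 + z*m + 1 = 0) (hm1 : ‖m‖ ≤ 1) (hre : |z.re| ≤ 2 - κ) :
    ((m:ℂ)^2).re ≤ 1 - κ^4/10000 := by
  by_contra hcon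
  push_neg at hcon
  have hre' := abs_le.mp hre
  have hnormSq : Complex.normSq (m^2) ≤ 1 := by
    rw [← Complex.sq_norm, norm_pow, ← pow_mul]
    exact pow_le_one₀ (norm_nonneg m) hm1
  have h21 : ‖m^2 - 1‖^2 < κ^4/5000 := by
    rw [Complex.sq_norm]
    have hexp : Complex.normSq (m^2 - 1) = Complex.normSq (m^2) - 2*(m^2).re + 1 := by
      simp [Complex.normSq_apply, Complex.sub_re, Complex.sub_im]
      ring
    rw [hexp]
    nlinarith
  have key : ∀ σ : ℂ, σ^2 = 1 → ‖m - σ‖^2 ≤ ‖m^2 - 1‖ →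
      κ ≤ ‖z + 2*σ‖ → False := by
    intro σ hσ2 hts hzlow
    set t := ‖m - σ‖ with htdef
    have ht0 : 0 ≤ t := norm_nonneg _
    have ht4 : t^4 < κ^4/5000 := by
      have : t^4 = (t^2)^2 := by ring
      rw [this]
      nlinarith [norm_nonneg (m^2 - 1)]
    have ht : t < κ/8 := by
      by_contra hle
      push_neg at hle
      have : (κ/8)^4 ≤ t^4 := pow_le_pow_left₀ (by positivity) hle 4
      nlinarith
    have habsσ : ‖σ‖ = 1 := by
      have : ‖σ‖ ^ 2 = 1 := by
        rw [← norm_pow, hσ2, norm_one]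
      nlinarith [norm_nonneg σ]
    have habsm : 3/4 ≤ ‖m‖ := by
      have htri : ‖σ‖ ≤ ‖m‖ + ‖σ - m‖ := by
        calc ‖σ‖ = ‖m + (σ - m)‖ := by ring_nf
        _ ≤ ‖m‖ + ‖σ - m‖ := norm_add_le _ _
      have : ‖σ - m‖ = t := by rw [htdef, ← norm_neg]; ring_nf
      rw [habsσ, this] at htri
      linarith
    have hquad2 : (z + 2*σ)*m = -(m - σ)^2 := by linear_combination hquad + hσ2
    have habs_eq : ‖z + 2*σ‖ * ‖m‖ = t^2 := by
      rw [← norm_mul, hquad2, norm_neg, norm_pow]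
    have h5 : κ * (3/4) ≤ t^2 := by
      calc κ * (3/4) ≤ ‖z + 2*σ‖ * ‖m‖ :=
            mul_le_mul hzlow habsm (by norm_num) (norm_nonneg _)
      _ = t^2 := habs_eq
    nlinarith
  rcases le_total (‖m - 1‖) (‖m + 1‖) with hσ | hσ
  · refine key 1 (by norm_num) ?_ ?_
    · have hmul : ‖m - 1‖ * ‖m + 1‖ = ‖m^2 - 1‖ := by
        rw [← norm_mul]
        congr 1
        ring
      nlinarith [norm_nonneg (m - 1)]
    · have h1 : (z + 2*1).re = z.re + 2 := by simp
      have := Complex.abs_re_le_norm (z + 2*1)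
      rw [h1] at this
      have : |z.re + 2| ≤ ‖z + 2*1‖ := this
      have habs2 : κ ≤ |z.re + 2| := by
        rw [abs_of_nonneg (by linarith)]
        linarith
      linarith
  · refine key (-1) (by norm_num) ?_ ?_
    · have hmul : ‖m - (-1)‖ * ‖m - 1‖ = ‖m^2 - 1‖ := by
        rw [← norm_mul]
        congr 1
        ring
      have h1 : ‖m - (-1)‖ = ‖m + 1‖ := by ring_nf
      nlinarith [norm_nonneg (m + 1)]
    · have h1 : (z + 2*(-1)).re = z.re - 2 := by
        simp
        ring
      have h2 := Complex.abs_re_le_norm (z + 2*(-1))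
      rw [h1] at h2
      have habs2 : κ ≤ |z.re - 2| := by
        rw [abs_of_nonpos (by linarith)]
        linarith
      linarith

lemma mscB_props {κ : ℝ} (hκ : 0 < κ) (hκ2 : κ ≤ 2) {z : ℂ} (him : 0 ≤ z.im)
    (hre : |z.re| ≤ 2 - κ) :
    ‖mscB z‖ ≤ 1 ∧ ((mscB z)^2).re ≤ 1 - κ^4/10000 := by
  have hre' := abs_le.mp hre
  by_cases hpos : 0 < z.im
  · have hz : z ≠ 0 := by
      intro h
      rw [h] at hpos
      simp at hpos
    rw [mscB, if_pos hpos]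
    refine ⟨msc_abs_le hz, msc_re_bound hκ hκ2 (msc_quadratic hz) (msc_abs_le hz) hre⟩
  · rw [mscB, if_neg hpos]
    have hzim : z.im = 0 := le_antisymm (not_lt.mp hpos) him
    set x := z.re with hx
    have hzx : z = (x:ℂ) := by
      apply Complex.ext
      · simp [hx]
      · simp [hzim]
    have h4x : 0 ≤ 4 - x^2 := by nlinarith
    set q := Real.sqrt (4 - x^2) with hq
    have hq2 : q^2 = 4 - x^2 := Real.sq_sqrt h4x
    have hq0 : 0 ≤ q := Real.sqrt_nonneg _
    set m := (-z + Complex.I * (q:ℂ)) / 2 with hm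
    have hmform : m = ((-x/2 : ℝ):ℂ) + ((q/2 : ℝ):ℂ) * Complex.I := by
      rw [hm, hzx]
      push_cast
      ring
    have hnorm : Complex.normSq m = 1 := by
      rw [hmform]
      simp [Complex.normSq_apply, Complex.add_re, Complex.add_im, Complex.mul_re,
        Complex.mul_im, Complex.I_re, Complex.I_im]
      nlinarith
    constructor
    · rw [Complex.norm_def, hnorm]
      simp
    · have hm2 : m^2 = (((x^2 - q^2)/4 : ℝ):ℂ) + ((-(x*q)/2 : ℝ):ℂ) * Complex.I := by
        rw [hmform]
        push_cast
        linear_combination ((q:ℂ)^2/4) * Complex.I_sq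
      rw [hm2]
      have hres : ((((x^2 - q^2)/4 : ℝ):ℂ) + ((-(x*q)/2 : ℝ):ℂ) * Complex.I).re
          = (x^2 - q^2)/4 := by
        simp [Complex.add_re, Complex.mul_re, Complex.I_re, Complex.I_im, ← Complex.ofReal_pow]
      rw [hres, hq2]
      have hx2 : x^2 ≤ (2-κ)^2 := by nlinarith
      have hx2' : x^2 ≤ 4 - 2*κ := by nlinarith
      have hk1 : κ^2 ≤ 2*κ := by nlinarith
      have hk2 : κ^4 ≤ 8*κ := by nlinarith [sq_nonneg κ, sq_nonneg (κ^2)]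
      linarith

lemma rep_bounds {N : ℕ} (x : Fin N) : -(N:ℤ) < 2 * rep x ∧ 2 * rep x ≤ N := by
  have hx := x.isLt
  unfold rep
  have h0 : (0:ℤ) ≤ (x.val:ℤ) := by positivity
  have h1 : (x.val:ℤ) < N := by exact_mod_cast hx
  split_ifs with h
  · have h2 : 2*(x.val:ℤ) ≤ N := by exact_mod_cast h
    omega
  · push_neg at h
    have h2 : (N:ℤ) < 2 * x.val := by exact_mod_cast h
    omega

lemma rep_congr {N : ℕ} (x : Fin N) : ∃ k : ℤ, rep x = (x.val : ℤ) + k * N := by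
  unfold rep
  split_ifs
  · exact ⟨0, by ring⟩
  · exact ⟨-1, by ring⟩

lemma sub_val_congr {N : ℕ} [NeZero N] (x y : Fin N) :
    ∃ k : ℤ, ((x - y).val : ℤ) = (x.val : ℤ) - y.val + k * N := by
  have hN : 0 < N := Nat.pos_of_ne_zero (NeZero.ne N)
  rw [Fin.sub_def]
  simp only []
  have hy : y.val ≤ N := le_of_lt y.isLt
  have hcast : (((N - y.val + x.val) % N : ℕ) : ℤ) = ((N:ℤ) - y.val + x.val) % N := by
    push_cast [Nat.cast_sub hy]
    ring_nf
  refine ⟨1 - ((N:ℤ) - y.val + x.val)/N, ?_⟩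
  rw [hcast, Int.emod_def]
  ring

lemma abs_rep_sub {N : ℕ} [NeZero N] (x y : Fin N) :
    |rep (x - y)| ≤ |rep x - rep y| := by
  have hN : 0 < N := Nat.pos_of_ne_zero (NeZero.ne N)
  have hNZ : (0:ℤ) < N := by exact_mod_cast hN
  obtain ⟨ha1, ha2⟩ := rep_bounds x
  obtain ⟨hb1, hb2⟩ := rep_bounds y
  obtain ⟨hd1, hd2⟩ := rep_bounds (x - y)
  obtain ⟨k1, hk1⟩ := rep_congr x
  obtain ⟨k2, hk2⟩ := rep_congr y
  obtain ⟨k3, hk3⟩ := rep_congr (x - y)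
  obtain ⟨k4, hk4⟩ := sub_val_congr x y
  set a := rep x
  set b := rep y
  set d := rep (x - y)
  have hj : a - b - d = (k1 - k2 - k3 - k4) * N := by
    rw [hk1, hk2, hk3, hk4]
    ring
  set j := k1 - k2 - k3 - k4 with hjd
  have hup : 2*(j*N) < 3*N := by rw [← hj]; linarith
  have hlo : -(3*N) < 2*(j*N) := by rw [← hj]; linarith
  have hj1 : j ≤ 1 := by nlinarith
  have hj2 : -1 ≤ j := by nlinarith
  set e := |a - b| with he
  have he1 : a - b ≤ e := le_abs_self _
  have he2 : -e ≤ a - b := neg_abs_le _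
  rw [abs_le]
  interval_cases j <;> omega

lemma zdist_sub_le {N : ℕ} [NeZero N] (x y : Fin N) :
    zdist (x - y) ≤ zdist x + zdist y := by
  unfold zdist
  have h1 := abs_rep_sub x y
  have h2 : |rep x - rep y| ≤ |rep x| + |rep y| := abs_sub _ _
  have h3 : |rep (x-y)| ≤ |rep x| + |rep y| := le_trans h1 h2
  rw [← Int.cast_abs, ← Int.cast_abs, ← Int.cast_abs]
  exact_mod_cast h3

open Fin.NatCast in
lemma zdist_natCast {N : ℕ} [NeZero N] {n : ℕ} (hn : 2*n ≤ N) (hnN : n < N) :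
    zdist ((n : Fin N)) = n := by
  have hv : ((n : Fin N)).val = n := Fin.val_cast_of_lt hnN
  unfold zdist rep
  rw [hv, if_pos hn]
  simp

open Fin.NatCast in
lemma conv_lower {N W : ℕ} [NeZero N] (hW : 0 < W) (cs Cs : ℝ) (hcs : 0 < cs) (hCs : 0 < Cs)
    (f : Fin N → ℝ) (hnn : ∀ x, 0 ≤ f x) (hsum : ∑ x, f x = 1)
    (hlow : ∀ x, zdist x ≤ W → cs/W ≤ f x) (hub : ∀ x, f x ≤ Cs/W) :
    cs^3/(4*(1+Cs)^2*W) ≤ ∑ x, (∑ y, f y * f (x - y)) * f x := by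
  have hNpos : 0 < N := Nat.pos_of_ne_zero (NeZero.ne N)
  have hWR : (0:ℝ) < W := by exact_mod_cast hW
  set L := (min W N)/2 with hL
  have hmem : ∀ n ∈ Finset.range (L+1), 2*n ≤ min W N ∧ n < N := by
    intro n hn
    rw [Finset.mem_range] at hn
    constructor
    · omega
    · have h1 : 2*n ≤ min W N := by omega
      have h2 : min W N ≤ N := min_le_right _ _
      omega
  set T : Finset (Fin N) := (Finset.range (L+1)).image (fun n : ℕ => (n : Fin N)) with hT
  have hinj : Set.InjOn (fun n : ℕ => (n : Fin N)) (Finset.range (L+1)) := by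
    intro a ha b hb hab
    have ha2 : a ∈ Finset.range (L+1) := by simpa using ha
    have hb2 : b ∈ Finset.range (L+1) := by simpa using hb
    have ha' := (hmem a ha2).2
    have hb' := (hmem b hb2).2
    have hv : ((a : Fin N)).val = ((b : Fin N)).val := congrArg Fin.val hab
    rwa [Fin.val_cast_of_lt ha', Fin.val_cast_of_lt hb'] at hv
  have hcard : T.card = L + 1 := by
    rw [hT, Finset.card_image_of_injOn hinj, Finset.card_range]
  have hzd : ∀ x ∈ T, zdist x ≤ W/2 := by
    intro x hx
    rw [hT, Finset.mem_image] at hx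
    obtain ⟨n, hn, rfl⟩ := hx
    obtain ⟨h1, h2⟩ := hmem n hn
    have h3 : 2*n ≤ N := le_trans h1 (min_le_right _ _)
    rw [zdist_natCast h3 h2]
    have h4 : 2*n ≤ W := le_trans h1 (min_le_left _ _)
    have : (2*n : ℝ) ≤ W := by exact_mod_cast h4
    push_cast at this ⊢
    linarith
  have hflow : ∀ x ∈ T, cs/W ≤ f x := by
    intro x hx
    apply hlow
    have := hzd x hx
    linarith
  have hfsub : ∀ x ∈ T, ∀ y ∈ T, cs/W ≤ f (x - y) := by
    intro x hx y hy
    apply hlow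
    have := zdist_sub_le x y
    have h1 := hzd x hx
    have h2 := hzd y hy
    linarith
  have hinner : ∀ x ∈ T, ((L:ℝ)+1) * ((cs/W)*(cs/W)) ≤ ∑ y, f y * f (x - y) := by
    intro x hx
    have h1 : ∑ y ∈ T, f y * f (x - y) ≤ ∑ y, f y * f (x - y) :=
      Finset.sum_le_sum_of_subset_of_nonneg (Finset.subset_univ T)
        (fun y _ _ => mul_nonneg (hnn y) (hnn _))
    have h2 : T.card • ((cs/W)*(cs/W)) ≤ ∑ y ∈ T, f y * f (x - y) := by
      apply Finset.card_nsmul_le_sum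
      intro y hy
      have := mul_le_mul (hflow y hy) (hfsub x hx y hy) (by positivity)
        (le_trans (by positivity) (hflow y hy))
      linarith
    rw [hcard] at h2
    rw [nsmul_eq_mul] at h2
    push_cast at h2
    linarith
  have houter : ((L:ℝ)+1) * ((((L:ℝ)+1) * ((cs/W)*(cs/W))) * (cs/W))
      ≤ ∑ x, (∑ y, f y * f (x - y)) * f x := by
    have h1 : ∑ x ∈ T, (∑ y, f y * f (x - y)) * f x ≤ ∑ x, (∑ y, f y * f (x - y)) * f x := by
      apply Finset.sum_le_sum_of_subset_of_nonneg (Finset.subset_univ T)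
      intro x _ _
      apply mul_nonneg _ (hnn x)
      apply Finset.sum_nonneg
      intro y _
      exact mul_nonneg (hnn y) (hnn _)
    have h2 : T.card • ((((L:ℝ)+1) * ((cs/W)*(cs/W))) * (cs/W))
        ≤ ∑ x ∈ T, (∑ y, f y * f (x - y)) * f x := by
      apply Finset.card_nsmul_le_sum
      intro x hx
      apply mul_le_mul (hinner x hx) (hflow x hx) (by positivity)
      exact le_trans (by positivity) (hinner x hx)
    rw [hcard, nsmul_eq_mul] at h2
    push_cast at h2
    linarith
  have hNW : (W:ℝ) ≤ N * Cs := by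
    have h1 : (1:ℝ) ≤ N * (Cs/W) := by
      rw [← hsum]
      calc ∑ x, f x ≤ ∑ _x : Fin N, Cs/W := Finset.sum_le_sum (fun x _ => hub x)
      _ = N * (Cs/W) := by
            rw [Finset.sum_const, Finset.card_univ, Fintype.card_fin, nsmul_eq_mul]
    have h1' : (1:ℝ) ≤ (N*Cs)/W := by rw [mul_div_assoc]; exact h1
    have := (le_div_iff₀ hWR).mp h1'
    linarith
  have hminL : (W:ℝ)/(1+Cs) ≤ ((min W N : ℕ):ℝ) := by
    rcases le_total W N with h | h
    · rw [min_eq_left h]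
      rw [div_le_iff₀ (by positivity)]
      nlinarith
    · rw [min_eq_right h]
      have hNR : (N:ℝ) ≥ W / Cs := by
        rw [ge_iff_le, div_le_iff₀ hCs]
        linarith [hNW]
      rw [div_le_iff₀ (by positivity)]
      have hN0 : (0:ℝ) ≤ N := by positivity
      nlinarith
  have hL1 : ((min W N : ℕ) : ℝ) / 2 ≤ ((L:ℝ)+1) := by
    have h2 : min W N < (L+1)*2 := by omega
    have h3 : ((min W N : ℕ):ℝ) < ((L:ℝ)+1)*2 := by exact_mod_cast h2
    linarith
  have hfinal : cs^3/(4*(1+Cs)^2*W) ≤ ((L:ℝ)+1) * ((((L:ℝ)+1) * ((cs/W)*(cs/W))) * (cs/W)) := by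
    have hL2 : (W:ℝ)/(2*(1+Cs)) ≤ ((L:ℝ)+1) := by
      have h5 : (W:ℝ)/(2*(1+Cs)) ≤ ((min W N : ℕ) : ℝ)/2 := by
        rw [div_le_div_iff₀ (by positivity) (by norm_num)]
        rw [div_le_iff₀ (by positivity)] at hminL
        nlinarith [hminL]
      linarith
    have hpos : (0:ℝ) < (L:ℝ)+1 := by positivity
    calc cs^3/(4*(1+Cs)^2*W) = ((W:ℝ)/(2*(1+Cs)))^2 * (cs^3/W^3) := by
          field_simp
          ring
    _ ≤ ((L:ℝ)+1)^2 * (cs^3/W^3) := by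
          apply mul_le_mul_of_nonneg_right _ (by positivity)
          apply pow_le_pow_left₀ (by positivity) hL2
    _ = ((L:ℝ)+1) * ((((L:ℝ)+1) * ((cs/W)*(cs/W))) * (cs/W)) := by
          field_simp
  linarith

lemma sum_shift {N : ℕ} [NeZero N] (f : Fin N → ℝ) (p : Fin N) :
    ∑ k, f (p - k) = ∑ x, f x :=
  Fintype.sum_equiv (Equiv.subLeft p) _ f (fun _ => rfl)

lemma sum_shift' {N : ℕ} [NeZero N] (f : Fin N → ℝ) (p : Fin N) :
    ∑ k, f (k - p) = ∑ x, f x :=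
  Fintype.sum_equiv (Equiv.subRight p) _ f (fun _ => rfl)

lemma conv_reindex {N : ℕ} [NeZero N] (f : Fin N → ℝ) (i : Fin N) :
    ∑ j, (∑ k, f (i-k) * f (k-j)) * f (i-j) = ∑ x, (∑ y, f y * f (x - y)) * f x := by
  apply Fintype.sum_equiv (Equiv.subLeft i)
  intro j
  simp only [Equiv.subLeft_apply]
  congr 1
  apply Fintype.sum_equiv (Equiv.subLeft i)
  intro k
  simp only [Equiv.subLeft_apply]
  rw [show i - j - (i - k) = k - j from by abel]

lemma entry_formula {N : ℕ} [NeZero N] (f : Fin N → ℝ) (m : ℂ) (τ : ℝ) (i j : Fin N) :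
    (((((1:ℂ)+τ)⁻¹ • (m^2 • (Matrix.of fun i j : Fin N => ((f (i-j):ℝ):ℂ))
        + (τ:ℂ) • (1 : Matrix (Fin N) (Fin N) ℂ)))^2)) i j
    = (((1:ℂ)+τ)⁻¹)^2 * ((m^4*((∑ k, f (i-k) * f (k-j) : ℝ):ℂ)
        + 2*(τ:ℂ)*m^2*((f (i-j):ℝ):ℂ)) + (τ:ℂ)^2 * (if i = j then 1 else 0)) := by
  rw [sq, Matrix.mul_apply]
  have hE : ∀ a b : Fin N,
      ((((1:ℂ)+τ)⁻¹ • (m^2 • (Matrix.of fun i j : Fin N => ((f (i-j):ℝ):ℂ))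
        + (τ:ℂ) • (1 : Matrix (Fin N) (Fin N) ℂ)))) a b
      = ((1:ℂ)+τ)⁻¹ * (m^2 * ((f (a-b):ℝ):ℂ) + (τ:ℂ) * (if a = b then 1 else 0)) := by
    intro a b
    simp [Matrix.smul_apply, Matrix.add_apply, Matrix.one_apply, Matrix.of_apply, smul_eq_mul]
  simp only [hE]
  have hsplit : ∀ k : Fin N,
      (((1:ℂ)+τ)⁻¹ * (m^2 * ((f (i-k):ℝ):ℂ) + (τ:ℂ) * (if i = k then 1 else 0))) *
      (((1:ℂ)+τ)⁻¹ * (m^2 * ((f (k-j):ℝ):ℂ) + (τ:ℂ) * (if k = j then 1 else 0)))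
      = (((1:ℂ)+τ)⁻¹)^2 * (m^4 * (((f (i-k):ℝ):ℂ) * ((f (k-j):ℝ):ℂ))
        + (τ:ℂ)*m^2*((f (i-k):ℝ):ℂ) * (if k = j then 1 else 0)
        + (τ:ℂ)*m^2*((f (k-j):ℝ):ℂ) * (if i = k then 1 else 0)
        + (τ:ℂ)^2 * ((if i = k then 1 else 0) * (if k = j then 1 else 0))) := by
    intro k
    ring
  simp only [hsplit, ← Finset.mul_sum]
  congr 1
  rw [Finset.sum_add_distrib, Finset.sum_add_distrib, Finset.sum_add_distrib]
  have h1 : ∑ k, m^4 * (((f (i-k):ℝ):ℂ) * ((f (k-j):ℝ):ℂ))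
      = m^4*((∑ k, f (i-k) * f (k-j) : ℝ):ℂ) := by
    rw [← Finset.mul_sum]
    congr 1
    push_cast
    rfl
  have h2 : ∑ k, (τ:ℂ)*m^2*((f (i-k):ℝ):ℂ) * (if k = j then 1 else 0)
      = (τ:ℂ)*m^2*((f (i-j):ℝ):ℂ) := by
    simp [Finset.sum_ite_eq', mul_ite]
  have h3 : ∑ k, (τ:ℂ)*m^2*((f (k-j):ℝ):ℂ) * (if i = k then 1 else 0)
      = (τ:ℂ)*m^2*((f (i-j):ℝ):ℂ) := by
    simp [Finset.sum_ite_eq, mul_ite]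
  have h4 : ∑ k, (τ:ℂ)^2 * ((if i = k then 1 else 0) * (if k = j then 1 else 0))
      = (τ:ℂ)^2 * (if i = j then 1 else 0) := by
    rw [← Finset.mul_sum]
    congr 1
    have : ∀ k : Fin N, (if i = k then (1:ℂ) else 0) * (if k = j then 1 else 0)
        = if i = k then (if k = j then (1:ℂ) else 0) else 0 := by
      intro k
      split_ifs <;> simp
    simp only [this]
    simp [Finset.sum_ite_eq]
  rw [h1, h2, h3, h4]
  ring

lemma row_bound {N W : ℕ} [NeZero N] (hW : 0 < W) (cs Cs τ δ : ℝ)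
    (hcs : 0 < cs) (hCs : 0 < Cs) (hτ : 0 < τ) (hδ0 : 0 < δ) (hδ1 : δ ≤ 1)
    (f : Fin N → ℝ) (hnn : ∀ x, 0 ≤ f x) (hsum : ∑ x, f x = 1)
    (hlow : ∀ x, zdist x ≤ W → cs/W ≤ f x) (hub : ∀ x, f x ≤ Cs/W)
    (m : ℂ) (hm1 : ‖m‖ ≤ 1) (hmre : ((m)^2).re ≤ 1 - δ) (i : Fin N) :
    ∑ j, ‖(((((1:ℂ)+τ)⁻¹ • (m^2 • (Matrix.of fun i j : Fin N => ((f (i-j):ℝ):ℂ))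
        + (τ:ℂ) • (1 : Matrix (Fin N) (Fin N) ℂ)))^2)) i j‖
    ≤ 1 - 2*(τ*δ*cs^3/(4*(1+2*τ)*Cs*(1+Cs)^2*(1+τ)^2)) := by
  have hWR : (0:ℝ) < W := by exact_mod_cast hW
  set D := Cs/W with hD
  have hDpos : 0 < D := by positivity
  set K := 2*τ*δ/((1+2*τ)*D) with hK
  have hKpos : 0 < K := by positivity
  have hCnn : ∀ j, (0:ℝ) ≤ ∑ k, f (i-k) * f (k-j) := fun j =>
    Finset.sum_nonneg (fun k _ => mul_nonneg (hnn _) (hnn _))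
  have hCub : ∀ j, ∑ k, f (i-k) * f (k-j) ≤ D := by
    intro j
    calc ∑ k, f (i-k) * f (k-j) ≤ ∑ k, D * f (k - j) := by
          apply Finset.sum_le_sum
          intro k _
          exact mul_le_mul_of_nonneg_right (hub _) (hnn _)
    _ = D * ∑ k, f (k - j) := by rw [Finset.mul_sum]
    _ = D := by rw [sum_shift' f j, hsum, mul_one]
  have habsc : ‖((1:ℂ)+τ)⁻¹‖ = (1+τ)⁻¹ := by
    rw [show ((1:ℂ)+τ) = (((1+τ:ℝ)):ℂ) by push_cast; ring]
    rw [norm_inv, Complex.norm_real, Real.norm_eq_abs, abs_of_pos (by linarith)]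
  have hpt : ∀ j, ‖(((((1:ℂ)+τ)⁻¹ • (m^2 • (Matrix.of fun i j : Fin N => ((f (i-j):ℝ):ℂ))
        + (τ:ℂ) • (1 : Matrix (Fin N) (Fin N) ℂ)))^2)) i j‖
      ≤ ((1+τ)⁻¹)^2 * (((∑ k, f (i-k) * f (k-j)) + 2*τ*(f (i-j))
          - K*((∑ k, f (i-k) * f (k-j)) * f (i-j))) + τ^2 * (if i = j then 1 else 0)) := by
    intro j
    rw [entry_formula f m τ i j, norm_mul, norm_pow, habsc]
    apply mul_le_mul_of_nonneg_left _ (by positivity)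
    refine le_trans (norm_add_le _ _) ?_
    have hY : ‖(τ:ℂ)^2 * (if i = j then 1 else 0)‖ = τ^2 * (if i = j then 1 else 0) := by
      split_ifs
      · rw [mul_one, mul_one, norm_pow, Complex.norm_real, Real.norm_eq_abs, abs_of_pos hτ]
      · simp
    rw [hY]
    have hkey := key_pointwise m τ δ (∑ k, f (i-k) * f (k-j)) (f (i-j)) D hτ hδ0.le hδ1 hm1 hmre
      (hCnn j) (hnn _) hDpos (hCub j) (hub _)
    rw [← hK] at hkey
    linarith
  refine le_trans (Finset.sum_le_sum (fun j (_ : j ∈ Finset.univ) => hpt j)) ?_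
  rw [← Finset.mul_sum]
  have hsplit : ∑ j, (((∑ k, f (i-k) * f (k-j)) + 2*τ*(f (i-j))
      - K*((∑ k, f (i-k) * f (k-j)) * f (i-j))) + τ^2 * (if i = j then 1 else 0))
      = (∑ j, ∑ k, f (i-k) * f (k-j)) + 2*τ*(∑ j, f (i-j))
        - K*(∑ j, (∑ k, f (i-k) * f (k-j)) * f (i-j))
        + τ^2 * (∑ j, if i = j then (1:ℝ) else 0) := by
    simp only [Finset.sum_add_distrib, Finset.sum_sub_distrib, Finset.mul_sum]
  rw [hsplit]
  have hS1 : ∑ j, ∑ k, f (i-k) * f (k-j) = 1 := by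
    rw [Finset.sum_comm]
    have : ∀ k : Fin N, ∑ j, f (i-k) * f (k-j) = f (i-k) := by
      intro k
      rw [← Finset.mul_sum, sum_shift f k, hsum, mul_one]
    rw [Finset.sum_congr rfl (fun k _ => this k), sum_shift f i, hsum]
  have hS2 : ∑ j, f (i-j) = 1 := by rw [sum_shift f i, hsum]
  have hS4 : ∑ j, (if i = j then (1:ℝ) else 0) = 1 := by simp
  have hS3 : cs^3/(4*(1+Cs)^2*W) ≤ ∑ j, (∑ k, f (i-k) * f (k-j)) * f (i-j) := by
    rw [conv_reindex f i]
    exact conv_lower hW cs Cs hcs hCs f hnn hsum hlow hub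
  rw [hS1, hS2, hS4]
  have hmono : ((1+τ)⁻¹)^2 * (1 + 2*τ*1 - K*(∑ j, (∑ k, f (i-k) * f (k-j)) * f (i-j)) + τ^2*1)
      ≤ ((1+τ)⁻¹)^2 * (1 + 2*τ*1 - K*(cs^3/(4*(1+Cs)^2*W)) + τ^2*1) := by
    apply mul_le_mul_of_nonneg_left _ (by positivity)
    have := mul_le_mul_of_nonneg_left hS3 hKpos.le
    linarith
  refine le_trans hmono (le_of_eq ?_)
  rw [hK, hD]
  field_simp
  ring

end CAux

open RBM

/-- **Contraction bound for the linearized self-consistent operator** (Lemma 4.2, first part):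
with `m = m_sc(z̃ + i0⁺)` and `|Re z̃| ≤ 2 - κ`, for any fixed `τ > 0` one has
`‖((m²S₀ + τ)/(1 + τ))²‖_{ℓ∞→ℓ∞} < 1 - c₁`. -/
theorem contraction_bound
    (cs Cs κ τ : ℝ) (hcs : 0 < cs) (hCs : 0 < Cs) (hκ : 0 < κ) (hτ : 0 < τ) :
    ∃ c₁ > (0:ℝ), ∀ (N W : ℕ), 0 < W →
    ∀ f : Fin N → ℝ, IsBandProfile W cs Cs f →
    ∀ zt : ℂ, 0 ≤ zt.im → |zt.re| ≤ 2 - κ →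
    rowSumNorm
        ((((1 : ℂ) + τ)⁻¹ •
            ((mscB zt) ^ 2 • (Matrix.of fun i j : Fin N => ((f (i - j) : ℝ) : ℂ))
              + (τ : ℂ) • (1 : Matrix (Fin N) (Fin N) ℂ))) ^ 2)
      < 1 - c₁ := by
  refine ⟨τ * (κ^4/10000) * cs^3 / (4*(1+2*τ)*Cs*(1+Cs)^2*(1+τ)^2), by positivity, ?_⟩
  set c₁ := τ * (κ^4/10000) * cs^3 / (4*(1+2*τ)*Cs*(1+Cs)^2*(1+τ)^2) with hc₁
  have hc₁pos : 0 < c₁ := by rw [hc₁]; positivity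
  intro N W hW f hf zt him hre
  have habs0 : (0:ℝ) ≤ |zt.re| := abs_nonneg _
  have hκ2 : κ ≤ 2 := by linarith
  have hN0 : N ≠ 0 := by
    intro h
    subst h
    have := hf.sum_one
    simp at this
  haveI : NeZero N := ⟨hN0⟩
  haveI : Nonempty (Fin N) := ⟨⟨0, Nat.pos_of_ne_zero hN0⟩⟩
  obtain ⟨hm1, hmre⟩ := CAux.mscB_props hκ hκ2 him hre
  have hδ0 : 0 < κ^4/10000 := by positivity
  have hκsq : κ^2 ≤ 4 := by nlinarith
  have hδ1 : κ^4/10000 ≤ 1 := by nlinarith [hκsq]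
  have hub : ∀ x, f x ≤ Cs/W := by
    intro x
    refine le_trans (hf.upper x) ?_
    have : (0:ℝ) < W := by exact_mod_cast hW
    split_ifs
    · exact le_refl _
    · positivity
  have hrow := fun i => CAux.row_bound hW cs Cs τ (κ^4/10000) hcs hCs hτ hδ0 hδ1 f
    hf.nonneg hf.sum_one hf.lower hub (mscB zt) hm1 hmre i
  have hsup : rowSumNorm
        ((((1 : ℂ) + τ)⁻¹ •
            ((mscB zt) ^ 2 • (Matrix.of fun i j : Fin N => ((f (i - j) : ℝ) : ℂ))
              + (τ : ℂ) • (1 : Matrix (Fin N) (Fin N) ℂ))) ^ 2)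
      ≤ 1 - 2*c₁ := by
    apply ciSup_le
    intro i
    exact hrow i
  have : (1:ℝ) - 2*c₁ < 1 - c₁ := by linarith
  exact lt_of_le_of_lt hsup this
end
end

section
/- Spectral gap for the band Dirichlet form: Let T := [−(log N)⁴W, (log N)⁴W] ∩ Z and let s_ij satisfy the band variance conditions. Then there is a constant c > 0 such that for every u ∈ L²(T) with ‖u‖₂ = 1 and u orthogonal to the constant vector (1, 1, …, 1), one has (1/4) Σ_{i,j ∈ T} s_ij (u_i − u_j)² ≥ c (log N)^{−13}. -/
open MeasureTheory ProbabilityTheory Matrix Finset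
open scoped Classical

noncomputable section

open RBM


-- Cauchy-Schwarz helper
lemma sq_sum_le_card_mul {α : Type*} (s : Finset α) (f : α → ℝ) :
    (∑ i ∈ s, f i) ^ 2 ≤ s.card * ∑ i ∈ s, f i ^ 2 := by
  have h := Finset.sum_mul_sq_le_sq_mul_sq s (fun _ => (1:ℝ)) f
  simpa using h

-- weighted variance identity
lemma var_ident {α : Type*} (s : Finset α) (w g : α → ℝ) :
    ∑ x ∈ s, ∑ y ∈ s, w x * w y * (g x - g y) ^ 2
      = 2 * (∑ x ∈ s, w x) * (∑ x ∈ s, w x * g x ^ 2) - 2 * (∑ x ∈ s, w x * g x) ^ 2 := by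
  have h1 : ∀ x ∈ s, ∑ y ∈ s, w x * w y * (g x - g y) ^ 2
      = (w x * g x ^ 2) * (∑ y ∈ s, w y) - 2 * ((w x * g x) * (∑ y ∈ s, w y * g y))
        + w x * (∑ y ∈ s, w y * g y ^ 2) := by
    intro x _
    rw [Finset.mul_sum, Finset.mul_sum, Finset.mul_sum, Finset.mul_sum,
      ← Finset.sum_sub_distrib, ← Finset.sum_add_distrib]
    exact Finset.sum_congr rfl fun y _ => by ring
  rw [Finset.sum_congr rfl h1]
  rw [Finset.sum_add_distrib, Finset.sum_sub_distrib, ← Finset.sum_mul, ← Finset.sum_mul,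
    ← Finset.mul_sum, ← Finset.sum_mul]
  ring

lemma var_ident' {α : Type*} (s : Finset α) (g : α → ℝ) :
    ∑ x ∈ s, ∑ y ∈ s, (g x - g y) ^ 2
      = 2 * (s.card : ℝ) * (∑ x ∈ s, g x ^ 2) - 2 * (∑ x ∈ s, g x) ^ 2 := by
  have h := var_ident s (fun _ => (1:ℝ)) g
  simpa using h

lemma aux_div (S S' c c' : ℝ) (hc : c ≠ 0) (hc' : c' ≠ 0) :
    (S'/c' - S/c)^2 = (c' * S - c * S')^2 / ((c * c')^2) := by
  rw [div_sub_div _ _ hc' hc, div_pow]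
  rw [div_eq_div_iff (by positivity) (by positivity)]
  ring

lemma block_poincare (m h nI : ℕ) (hm : 1 ≤ m) (hh : 1 ≤ h)
    (B : ℕ → Finset ℤ) (U : ℤ → ℝ)
    (hcard : ∀ b, b < m → (h:ℝ) ≤ ((B b).card : ℝ))
    (hQ1 : ∑ b ∈ range m, ∑ x ∈ B b, U x ^ 2 = 1)
    (hS0 : ∑ b ∈ range m, ∑ x ∈ B b, U x = 0)
    (hwn : ∑ b ∈ range m, ((B b).card : ℝ) = nI) :
    2 * (h:ℝ)^2 ≤ (h:ℝ) * (∑ b ∈ range m, ∑ x ∈ B b, ∑ y ∈ B b, (U x - U y)^2)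
       + (nI:ℝ) * m * (∑ k ∈ range (m-1), ∑ x ∈ B k, ∑ y ∈ B (k+1), (U x - U y)^2) := by
  have hhR : (0:ℝ) < h := by exact_mod_cast hh
  have hwpos : ∀ b, b < m → (0:ℝ) < ((B b).card : ℝ) :=
    fun b hb => lt_of_lt_of_le hhR (hcard b hb)
  set v : ℕ → ℝ := fun b => (∑ x ∈ B b, U x) / ((B b).card : ℝ) with hv
  set P : ℝ := ∑ b ∈ range m, ∑ x ∈ B b, ∑ y ∈ B b, (U x - U y)^2 with hP
  set C : ℝ := ∑ k ∈ range (m-1), ∑ x ∈ B k, ∑ y ∈ B (k+1), (U x - U y)^2 with hC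
  have hPnn : 0 ≤ P := by rw [hP]; positivity
  have hCnn : 0 ≤ C := by rw [hC]; positivity
  have hnIpos : (0:ℝ) < nI := by
    rw [← hwn]
    have h0m : 0 ∈ range m := mem_range.mpr hm
    have := Finset.single_le_sum (f := fun b => ((B b).card : ℝ))
      (fun b hb => le_of_lt (hwpos b (mem_range.mp hb))) h0m
    linarith [hwpos 0 hm]
  -- Step A
  have hA : ∀ b, b < m → ∑ x ∈ B b, U x ^ 2
      ≤ ((B b).card : ℝ) * v b ^ 2 + (∑ x ∈ B b, ∑ y ∈ B b, (U x - U y)^2) / (2*h) := by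
    intro b hb
    have hide := var_ident' (B b) U
    have hwb := hwpos b hb
    have hPbnn : (0:ℝ) ≤ ∑ x ∈ B b, ∑ y ∈ B b, (U x - U y)^2 := by positivity
    have key : ((B b).card : ℝ) * v b ^ 2
        + (∑ x ∈ B b, ∑ y ∈ B b, (U x - U y)^2) / (2 * ((B b).card : ℝ))
        = ∑ x ∈ B b, U x ^ 2 := by
      rw [hide, hv]
      field_simp
      ring
    rw [← key]
    gcongr
    exact_mod_cast hcard b hb
  -- weighted Poincaré identity
  have hwv : ∀ b, b < m → ((B b).card : ℝ) * v b = ∑ x ∈ B b, U x := by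
    intro b hb
    have hne : ((B b).card:ℝ) ≠ 0 := ne_of_gt (hwpos b hb)
    rw [hv]
    field_simp
  have hvS0 : ∑ b ∈ range m, ((B b).card:ℝ) * v b = 0 := by
    rw [Finset.sum_congr rfl (fun b hb => hwv b (mem_range.mp hb))]
    exact hS0
  have hident := var_ident (range m) (fun b => ((B b).card:ℝ)) v
  rw [hwn, hvS0] at hident
  -- Step C
  set Δ : ℝ := ∑ k ∈ range (m-1), (v (k+1) - v k)^2 with hΔ
  have hΔnn : 0 ≤ Δ := by rw [hΔ]; positivity
  have hCC : ∀ b ∈ range m, ∀ b' ∈ range m, (v b - v b')^2 ≤ m * Δ := by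
    have key : ∀ b b', b' < m → b ≤ b' → (v b' - v b)^2 ≤ m * Δ := by
      intro b b' hb' hbb
      have tele : ∑ k ∈ Finset.Ico b b', (v (k+1) - v k) = v b' - v b := by
        rw [Finset.sum_Ico_eq_sub _ hbb, Finset.sum_range_sub v, Finset.sum_range_sub v]
        ring
      rw [← tele]
      calc (∑ k ∈ Finset.Ico b b', (v (k+1) - v k))^2
          ≤ ((Finset.Ico b b').card : ℝ) * ∑ k ∈ Finset.Ico b b', (v (k+1) - v k)^2 :=
            sq_sum_le_card_mul _ _
        _ ≤ (m:ℝ) * Δ := by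
            apply mul_le_mul
            · rw [Nat.card_Ico]; exact_mod_cast (by omega : b' - b ≤ m)
            · rw [hΔ]
              apply Finset.sum_le_sum_of_subset_of_nonneg
              · intro k hk
                rw [Finset.mem_Ico] at hk
                rw [Finset.mem_range]
                omega
              · intros; positivity
            · positivity
            · positivity
    intro b hb b' hb'
    rw [mem_range] at hb hb'
    rcases le_total b b' with hb2 | hb2
    · have h1 := key b b' hb' hb2
      calc (v b - v b')^2 = (v b' - v b)^2 := by ring
        _ ≤ _ := h1
    · exact key b' b hb hb2
  -- ∑ w v² ≤ nI m Δ / 2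
  have hsum2 : ∑ b ∈ range m, ((B b).card:ℝ) * v b ^2 ≤ (nI:ℝ) * m * Δ / 2 := by
    have hbound : ∑ b ∈ range m, ∑ b' ∈ range m,
          ((B b).card:ℝ)*((B b').card:ℝ)*(v b - v b')^2
        ≤ ∑ b ∈ range m, ∑ b' ∈ range m, ((B b).card:ℝ)*((B b').card:ℝ)*((m:ℝ)*Δ) := by
      apply Finset.sum_le_sum; intro b hb
      apply Finset.sum_le_sum; intro b' hb'
      exact mul_le_mul_of_nonneg_left (hCC b hb b' hb') (by positivity)
    have hsq : ∑ b ∈ range m, ∑ b' ∈ range m, ((B b).card:ℝ)*((B b').card:ℝ)*((m:ℝ)*Δ)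
        = (nI:ℝ)^2 * ((m:ℝ)*Δ) := by
      simp only [← Finset.sum_mul, ← Finset.mul_sum]
      rw [hwn]
      ring
    rw [hsq] at hbound
    have h2 : 2 * (nI:ℝ) * (∑ b ∈ range m, ((B b).card:ℝ) * v b ^2) ≤ (nI:ℝ)^2 * ((m:ℝ)*Δ) := by
      nlinarith [hident, hbound]
    nlinarith [h2, hnIpos]
  -- Step D : Δ ≤ C / h²
  have hD : Δ ≤ C / (h:ℝ)^2 := by
    rw [hΔ, hC, Finset.sum_div]
    apply Finset.sum_le_sum
    intro k hk
    rw [Finset.mem_range] at hk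
    have hk1 : k < m := by omega
    have hk2 : k + 1 < m := by omega
    have hwk := hwpos k hk1
    have hwk2 := hwpos (k+1) hk2
    have hck := hcard k hk1
    have hck2 := hcard (k+1) hk2
    have hCknn : (0:ℝ) ≤ ∑ x ∈ B k, ∑ y ∈ B (k+1), (U x - U y)^2 := by positivity
    have hnum : (∑ x ∈ B k, ∑ y ∈ B (k+1), (U x - U y))
        = ((B (k+1)).card : ℝ) * (∑ x ∈ B k, U x) - ((B k).card:ℝ) * (∑ y ∈ B (k+1), U y) := by
      simp only [Finset.sum_sub_distrib, Finset.sum_const, nsmul_eq_mul, ← Finset.mul_sum]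
    have hcs2 : (∑ x ∈ B k, ∑ y ∈ B (k+1), (U x - U y))^2
        ≤ (((B k).card : ℝ) * ((B (k+1)).card : ℝ))
          * ∑ x ∈ B k, ∑ y ∈ B (k+1), (U x - U y)^2 := by
      calc (∑ x ∈ B k, ∑ y ∈ B (k+1), (U x - U y))^2
          ≤ ((B k).card : ℝ) * ∑ x ∈ B k, (∑ y ∈ B (k+1), (U x - U y))^2 :=
            sq_sum_le_card_mul _ _
        _ ≤ ((B k).card : ℝ)
            * ∑ x ∈ B k, (((B (k+1)).card : ℝ) * ∑ y ∈ B (k+1), (U x - U y)^2) := by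
            gcongr with x hx
            exact sq_sum_le_card_mul _ _
        _ = _ := by rw [← Finset.mul_sum]; ring
    have hne1 : ((B k).card:ℝ) ≠ 0 := ne_of_gt hwk
    have hne2 : ((B (k+1)).card:ℝ) ≠ 0 := ne_of_gt hwk2
    have hDpos : (0:ℝ) < (((B k).card : ℝ) * ((B (k+1)).card : ℝ))^2 :=
      pow_pos (mul_pos hwk hwk2) 2
    have hveq : (v (k+1) - v k)^2
        = (∑ x ∈ B k, ∑ y ∈ B (k+1), (U x - U y))^2
          / ((((B k).card : ℝ) * ((B (k+1)).card : ℝ))^2) := by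
      rw [hv]
      dsimp only
      rw [aux_div _ _ _ _ hne1 hne2, ← hnum]
    rw [hveq]
    calc (∑ x ∈ B k, ∑ y ∈ B (k+1), (U x - U y))^2
          / ((((B k).card : ℝ) * ((B (k+1)).card : ℝ))^2)
        ≤ ((((B k).card : ℝ) * ((B (k+1)).card : ℝ))
            * ∑ x ∈ B k, ∑ y ∈ B (k+1), (U x - U y)^2)
          / ((((B k).card : ℝ) * ((B (k+1)).card : ℝ))^2) :=
          (div_le_div_iff_of_pos_right hDpos).mpr hcs2
      _ = (∑ x ∈ B k, ∑ y ∈ B (k+1), (U x - U y)^2)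
            / (((B k).card : ℝ) * ((B (k+1)).card : ℝ)) := by
          rw [pow_two]
          exact mul_div_mul_left _ _ (ne_of_gt (mul_pos hwk hwk2))
      _ ≤ (∑ x ∈ B k, ∑ y ∈ B (k+1), (U x - U y)^2) / (h:ℝ)^2 := by
          apply div_le_div_of_nonneg_left hCknn (pow_pos hhR 2)
          calc (h:ℝ)^2 = (h:ℝ)*(h:ℝ) := pow_two _
            _ ≤ _ := mul_le_mul hck hck2 (le_of_lt hhR) (le_of_lt hwk)
  -- final assembly
  have hchain : (1:ℝ) ≤ (nI:ℝ)*m*C/(2*(h:ℝ)^2) + P/(2*(h:ℝ)) := by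
    have hQle : (1:ℝ) ≤ (∑ b ∈ range m, ((B b).card:ℝ) * v b ^2) + P/(2*(h:ℝ)) := by
      rw [← hQ1, hP, Finset.sum_div]
      rw [← Finset.sum_add_distrib]
      apply Finset.sum_le_sum
      intro b hb
      exact hA b (mem_range.mp hb)
    have h3 : (nI:ℝ)*m*Δ/2 ≤ (nI:ℝ)*m*C/(2*(h:ℝ)^2) := by
      calc (nI:ℝ)*m*Δ/2 ≤ (nI:ℝ)*m*(C/(h:ℝ)^2)/2 := by gcongr
        _ = (nI:ℝ)*m*C/(2*(h:ℝ)^2) := by ring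
    linarith [hsum2]
  calc 2*(h:ℝ)^2 = 2*(h:ℝ)^2 * 1 := by ring
    _ ≤ 2*(h:ℝ)^2 * ((nI:ℝ)*m*C/(2*(h:ℝ)^2) + P/(2*(h:ℝ))) :=
        mul_le_mul_of_nonneg_left hchain (by positivity)
    _ = (h:ℝ)*P + (nI:ℝ)*m*C := by field_simp; ring

set_option maxHeartbeats 1000000 in
lemma core_gap (cs : ℝ) (hcs : 0 < cs) (W : ℕ) (hW : 0 < W) (K : ℤ) (hKW : (W:ℤ) ≤ K)
    (U F : ℤ → ℝ) (hF0 : ∀ d, 0 ≤ F d)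
    (hFlow : ∀ d : ℤ, |d| ≤ (W:ℤ) → cs / W ≤ F d)
    (hU2 : ∑ x ∈ Finset.Icc (-K) K, U x ^ 2 = 1)
    (hU1 : ∑ x ∈ Finset.Icc (-K) K, U x = 0) :
    cs * (W:ℝ)^2 / (27 * (2*(K:ℝ)+1)^2)
      ≤ ∑ x ∈ Finset.Icc (-K) K, ∑ y ∈ Finset.Icc (-K) K, F (x - y) * (U x - U y)^2 := by
  classical
  set I : Finset ℤ := Finset.Icc (-K) K with hI
  have hK1 : (1:ℤ) ≤ K := le_trans (by exact_mod_cast hW) hKW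
  set h : ℕ := (W + 2) / 3 with hh
  have hh1 : 1 ≤ h := by omega
  have h3h : 3 * h ≤ W + 2 := by omega
  have hW3h : W ≤ 3 * h := by omega
  have hcardI : I.card = (2*K+1).toNat := by
    rw [hI, Int.card_Icc]
    congr 1
    ring
  set nI : ℕ := I.card with hnI
  have hnIZ : (nI:ℤ) = 2*K+1 := by
    rw [hcardI]
    exact Int.toNat_of_nonneg (by omega)
  have hWnI : 2*W+1 ≤ nI := by omega
  have hhnI : h ≤ nI := by omega
  set m : ℕ := nI / h with hm
  have hm1 : 1 ≤ m := (Nat.one_le_div_iff (by omega)).mpr hhnI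
  have hmh : m * h ≤ nI := by
    rw [hm]
    exact Nat.div_mul_le_self nI h
  have hnImh : nI < m * h + h := by
    rw [hm]
    nlinarith [Nat.div_add_mod nI h, Nat.mod_lt nI (show 0 < h by omega)]
  set blk : ℤ → ℕ := fun x => min ((x + K).toNat / h) (m - 1) with hblk
  have hblkm : ∀ x, blk x < m := by
    intro x
    have : blk x ≤ m - 1 := min_le_right _ _
    omega
  -- block bounds
  have hF2 : ∀ x ∈ I, ((blk x : ℤ) * h ≤ x + K ∧ x + K + 2 ≤ (blk x : ℤ) * h + 2 * h) := by
    intro x hx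
    rw [hI, Finset.mem_Icc] at hx
    have hj : (((x + K).toNat : ℤ)) = x + K := Int.toNat_of_nonneg (by omega)
    set j : ℕ := (x + K).toNat with hjd
    have hjn' : (j:ℤ) + 1 ≤ nI := by omega
    have hjn : j + 1 ≤ nI := by exact_mod_cast hjn'
    have hdm := Nat.div_add_mod j h
    have hmod := Nat.mod_lt j (show 0 < h by omega)
    rcases le_or_gt (j / h) (m - 1) with c | c
    · have hb : blk x = j / h := by
        rw [hblk]
        exact min_eq_left c
      have hA : (j/h) * h ≤ j := Nat.div_mul_le_self j h
      have hB : j + 2 ≤ (j/h)*h + 2*h := by nlinarith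
      have hA' : ((j/h * h : ℕ) : ℤ) ≤ (j:ℤ) := by exact_mod_cast hA
      have hB' : (j:ℤ) + 2 ≤ ((j/h*h + 2*h : ℕ) : ℤ) := by exact_mod_cast hB
      push_cast at hA' hB'
      rw [hb]
      push_cast
      constructor <;> linarith
    · have hb : blk x = m - 1 := by
        rw [hblk]
        exact min_eq_right (le_of_lt c)
      have hA : (m-1) * h ≤ j :=
        le_trans (Nat.mul_le_mul_right h (by omega : m - 1 ≤ j / h)) (Nat.div_mul_le_self j h)
      have hB : j + 2 ≤ (m-1)*h + 2*h := by
        have h1 : (m-1)*h + h = m*h := by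
          have h2 : m - 1 + 1 = m := by omega
          calc (m-1)*h + h = ((m-1)+1)*h := by ring
            _ = m*h := by rw [h2]
        omega
      zify [hm1] at hA hB
      rw [hb]
      push_cast [hm1]
      constructor <;> linarith
  -- distance bound
  have hdist : ∀ x ∈ I, ∀ y ∈ I, (blk x = blk y ∨ blk y = blk x + 1) → |x - y| ≤ (W:ℤ) := by
    intro x hx y hy hc
    obtain ⟨hx1, hx2⟩ := hF2 x hx
    obtain ⟨hy1, hy2⟩ := hF2 y hy
    have hWh : (W:ℤ) ≤ 3 * h := by exact_mod_cast hW3h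
    have hhZ : (1:ℤ) ≤ (h:ℤ) := by exact_mod_cast hh1
    rcases hc with hc | hc
    · rw [hc] at hx1 hx2
      rw [abs_le]
      constructor <;> linarith
    · have hcz : (blk y : ℤ) = (blk x : ℤ) + 1 := by exact_mod_cast hc
      rw [hcz] at hy1 hy2
      have e : ((blk x:ℤ)+1)*(h:ℤ) = (blk x:ℤ)*(h:ℤ) + h := by ring
      rw [e] at hy1 hy2
      rw [abs_le]
      constructor <;> linarith
  -- block cardinality lower bound
  set B : ℕ → Finset ℤ := fun b => I.filter (fun x => blk x = b) with hB
  have hcardB : ∀ b, b < m → (h:ℝ) ≤ ((B b).card : ℝ) := by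
    intro b hb
    have hsub : Finset.Icc (-K + (b:ℤ)*h) (-K + (b:ℤ)*h + h - 1) ⊆ B b := by
      intro x hx
      rw [Finset.mem_Icc] at hx
      have hbm : b ≤ m - 1 := by omega
      have hbh : ((b:ℤ)+1) * h ≤ (m:ℤ)*h := by
        have hn : (b+1) * h ≤ m * h := Nat.mul_le_mul_right h (by omega)
        exact_mod_cast hn
      have hmhZ : (m:ℤ)*(h:ℤ) ≤ (nI:ℤ) := by exact_mod_cast hmh
      have hbh0 : (0:ℤ) ≤ (b:ℤ)*h := by positivity
      have hhZ : (1:ℤ) ≤ (h:ℤ) := by exact_mod_cast hh1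
      have e2 : ((b:ℤ)+1)*(h:ℤ) = (b:ℤ)*(h:ℤ) + h := by ring
      rw [e2] at hbh
      have hxI : x ∈ I := by
        rw [hI, Finset.mem_Icc]
        constructor
        · linarith
        · linarith
      have hj : (((x + K).toNat : ℤ)) = x + K := Int.toNat_of_nonneg (by linarith)
      have hjb1 : b * h ≤ (x+K).toNat := by
        have : ((b * h : ℕ) : ℤ) ≤ ((x+K).toNat : ℤ) := by
          rw [hj]; push_cast; linarith
        exact_mod_cast this
      have hjb2 : (x+K).toNat < (b+1)*h := by
        have : ((x+K).toNat : ℤ) < (((b+1)*h : ℕ) : ℤ) := by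
          rw [hj]; push_cast; linarith
        exact_mod_cast this
      have hdiv : (x+K).toNat / h = b := Nat.div_eq_of_lt_le hjb1 hjb2
      rw [hB, Finset.mem_filter]
      refine ⟨hxI, ?_⟩
      rw [hblk]
      simp only [hdiv]
      exact min_eq_left hbm
    have hcc : h ≤ (B b).card := by
      have hcalc : (Finset.Icc (-K + (b:ℤ)*h) (-K + (b:ℤ)*h + h - 1)).card = h := by
        rw [Int.card_Icc]
        have : -K + (b:ℤ)*h + h - 1 + 1 - (-K + (b:ℤ)*h) = (h:ℤ) := by ring
        rw [this]
        exact Int.toNat_natCast h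
      rw [← hcalc]
      exact Finset.card_le_card hsub
    exact_mod_cast hcc
  -- apply block_poincare
  have hmaps : ∀ x ∈ I, blk x ∈ Finset.range m := fun x _ => Finset.mem_range.mpr (hblkm x)
  have hQ1 : ∑ b ∈ Finset.range m, ∑ x ∈ B b, U x ^ 2 = 1 := by
    rw [hB]
    rw [Finset.sum_fiberwise_of_maps_to hmaps (fun x => U x ^ 2)]
    exact hU2
  have hS0 : ∑ b ∈ Finset.range m, ∑ x ∈ B b, U x = 0 := by
    rw [hB]
    rw [Finset.sum_fiberwise_of_maps_to hmaps U]
    exact hU1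
  have hwn : ∑ b ∈ Finset.range m, ((B b).card : ℝ) = (nI:ℝ) := by
    have hfib := Finset.sum_fiberwise_of_maps_to hmaps (fun _ => (1:ℝ))
    simp only [Finset.sum_const, nsmul_eq_mul, mul_one] at hfib
    rw [hB]
    exact hfib
  have hbp := block_poincare m h nI hm1 hh1 B U hcardB hQ1 hS0 hwn
  -- identify P and C with filtered double sums and bound by the Dirichlet form
  set D : ℝ := ∑ x ∈ I, ∑ y ∈ I, F (x - y) * (U x - U y)^2 with hD
  have hDnn : 0 ≤ D := by
    rw [hD]
    apply Finset.sum_nonneg; intro x _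
    apply Finset.sum_nonneg; intro y _
    exact mul_nonneg (hF0 _) (sq_nonneg _)
  -- pointwise bound helper
  have hpoint : ∀ x ∈ I, ∀ y ∈ I, (blk x = blk y ∨ blk y = blk x + 1) →
      (U x - U y)^2 ≤ (W/cs) * (F (x-y) * (U x - U y)^2) := by
    intro x hx y hy hc
    have hF := hFlow (x - y) (hdist x hx y hy hc)
    have hWpos : (0:ℝ) < W := by exact_mod_cast hW
    have h1 : cs/W * (U x - U y)^2 ≤ F (x-y) * (U x - U y)^2 :=
      mul_le_mul_of_nonneg_right hF (sq_nonneg _)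
    calc (U x - U y)^2 = (W/cs) * (cs/W * (U x - U y)^2) := by
          field_simp
      _ ≤ (W/cs) * (F (x-y) * (U x - U y)^2) := by
          apply mul_le_mul_of_nonneg_left h1 (by positivity)
  -- sum over blocks of P
  have hPsum : ∑ b ∈ Finset.range m, ∑ x ∈ B b, ∑ y ∈ B b, (U x - U y)^2
      = ∑ x ∈ I, ∑ y ∈ I, (if blk y = blk x then (U x - U y)^2 else 0) := by
    rw [hB]
    simp only [Finset.sum_filter]
    rw [Finset.sum_comm]
    apply Finset.sum_congr rfl
    intro x hx
    rw [Finset.sum_ite_eq (Finset.range m) (blk x)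
      (fun b => ∑ y ∈ I, if blk y = b then (U x - U y)^2 else 0)]
    simp only [hmaps x hx, if_true]
  have hCsum : ∑ k ∈ Finset.range (m-1), ∑ x ∈ B k, ∑ y ∈ B (k+1), (U x - U y)^2
      = ∑ x ∈ I, ∑ y ∈ I, (if blk x ∈ Finset.range (m-1) ∧ blk y = blk x + 1
          then (U x - U y)^2 else 0) := by
    rw [hB]
    simp only [Finset.sum_filter]
    rw [Finset.sum_comm]
    apply Finset.sum_congr rfl
    intro x hx
    have hstep : ∀ k : ℕ, (if blk x = k then ∑ y ∈ I, if blk y = k + 1 then (U x - U y)^2 else 0 else 0)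
        = (if k = blk x then (fun b => ∑ y ∈ I, if blk y = b + 1 then (U x - U y)^2 else 0) k else 0) := by
      intro k
      by_cases hk : blk x = k
      · simp [hk]
      · simp [hk, Ne.symm hk]
    rw [Finset.sum_congr rfl (fun k _ => hstep k)]
    rw [Finset.sum_ite_eq' (Finset.range (m-1)) (blk x)
      (fun b => ∑ y ∈ I, if blk y = b + 1 then (U x - U y)^2 else 0)]
    by_cases hin : blk x ∈ Finset.range (m-1)
    · simp only [hin, if_true]
      apply Finset.sum_congr rfl
      intro y hy
      simp [hin]
    · simp only [hin, if_false]
      symm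
      apply Finset.sum_eq_zero
      intro y hy
      simp [hin]
  -- bound P and C by (W/cs) * D
  have hWcs : (0:ℝ) < (W:ℝ)/cs := by
    apply div_pos _ hcs
    exact_mod_cast hW
  have hPle : ∑ b ∈ Finset.range m, ∑ x ∈ B b, ∑ y ∈ B b, (U x - U y)^2 ≤ (W/cs) * D := by
    rw [hPsum, hD, Finset.mul_sum]
    apply Finset.sum_le_sum
    intro x hx
    rw [Finset.mul_sum]
    apply Finset.sum_le_sum
    intro y hy
    by_cases hxy : blk y = blk x
    · rw [if_pos hxy]
      exact hpoint x hx y hy (Or.inl hxy.symm)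
    · rw [if_neg hxy]
      exact mul_nonneg (le_of_lt hWcs) (mul_nonneg (hF0 _) (sq_nonneg _))
  have hCle : ∑ k ∈ Finset.range (m-1), ∑ x ∈ B k, ∑ y ∈ B (k+1), (U x - U y)^2 ≤ (W/cs) * D := by
    rw [hCsum, hD, Finset.mul_sum]
    apply Finset.sum_le_sum
    intro x hx
    rw [Finset.mul_sum]
    apply Finset.sum_le_sum
    intro y hy
    by_cases hxy : blk x ∈ Finset.range (m-1) ∧ blk y = blk x + 1
    · rw [if_pos hxy]
      exact hpoint x hx y hy (Or.inr hxy.2)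
    · rw [if_neg hxy]
      exact mul_nonneg (le_of_lt hWcs) (mul_nonneg (hF0 _) (sq_nonneg _))
  -- final numeric chain
  have hhR : (0:ℝ) < (h:ℝ) := by exact_mod_cast hh1
  have hmR : (0:ℝ) < (m:ℝ) := by exact_mod_cast hm1
  have hnR : (0:ℝ) < (nI:ℝ) := by
    have : (0:ℤ) < (nI:ℤ) := by omega
    exact_mod_cast this
  have hWR : (0:ℝ) < (W:ℝ) := by exact_mod_cast hW
  have hhnIR : (h:ℝ) ≤ (nI:ℝ) := by exact_mod_cast hhnI
  have hmhR : (m:ℝ) * (h:ℝ) ≤ (nI:ℝ) := by exact_mod_cast hmh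
  have hW3hR : (W:ℝ) ≤ 3*(h:ℝ) := by exact_mod_cast hW3h
  -- 2 h² ≤ h (W/cs) D + nI m (W/cs) D
  have step1 : 2*(h:ℝ)^2 ≤ ((h:ℝ) + (nI:ℝ)*(m:ℝ)) * ((W/cs) * D) := by
    calc 2*(h:ℝ)^2 ≤ (h:ℝ) * (∑ b ∈ Finset.range m, ∑ x ∈ B b, ∑ y ∈ B b, (U x - U y)^2)
          + (nI:ℝ) * m * (∑ k ∈ Finset.range (m-1), ∑ x ∈ B k, ∑ y ∈ B (k+1), (U x - U y)^2) := hbp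
      _ ≤ (h:ℝ) * ((W/cs) * D) + (nI:ℝ)*m*((W/cs)*D) := by
          apply add_le_add
          · exact mul_le_mul_of_nonneg_left hPle (le_of_lt hhR)
          · exact mul_le_mul_of_nonneg_left hCle (by positivity)
      _ = ((h:ℝ) + (nI:ℝ)*(m:ℝ)) * ((W/cs) * D) := by ring
  have step2 : 2*(h:ℝ)^2 ≤ 2*(nI:ℝ)*(m:ℝ) * ((W/cs)*D) := by
    have hm1R : (1:ℝ) ≤ (m:ℝ) := by exact_mod_cast hm1
    have hnm : (nI:ℝ) ≤ (nI:ℝ)*(m:ℝ) := by nlinarith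
    have hle : (h:ℝ) + (nI:ℝ)*(m:ℝ) ≤ 2*(nI:ℝ)*(m:ℝ) := by linarith
    calc 2*(h:ℝ)^2 ≤ ((h:ℝ) + (nI:ℝ)*(m:ℝ)) * ((W/cs) * D) := step1
      _ ≤ 2*(nI:ℝ)*(m:ℝ) * ((W/cs)*D) := by
          apply mul_le_mul_of_nonneg_right hle (by positivity)
  -- h² cs ≤ nI m W D, then m ≤ nI/h, h ≥ W/3
  have step3 : (h:ℝ)^2 * cs ≤ (nI:ℝ)*(m:ℝ)*(W:ℝ)*D := by
    have h1 : 2*(h:ℝ)^2 * cs ≤ 2*(nI:ℝ)*(m:ℝ)*((W/cs)*D) * cs :=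
      mul_le_mul_of_nonneg_right step2 (le_of_lt hcs)
    have h2 : 2*(nI:ℝ)*(m:ℝ)*(((W:ℝ)/cs)*D)*cs = 2*((nI:ℝ)*(m:ℝ)*(W:ℝ)*D) := by
      field_simp
    rw [h2] at h1
    linarith
  have step4 : (h:ℝ)^3 * cs ≤ (nI:ℝ)^2*(W:ℝ)*D := by
    have hmle : (m:ℝ) ≤ (nI:ℝ)/(h:ℝ) := by
      rw [le_div_iff₀ hhR]
      exact hmhR
    have h1 : (nI:ℝ)*(m:ℝ)*(W:ℝ)*D ≤ (nI:ℝ)*((nI:ℝ)/(h:ℝ))*(W:ℝ)*D := by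
      apply mul_le_mul_of_nonneg_right _ hDnn
      apply mul_le_mul_of_nonneg_right _ (le_of_lt hWR)
      exact mul_le_mul_of_nonneg_left hmle (le_of_lt hnR)
    have h2 : (h:ℝ) * ((h:ℝ)^2 * cs) ≤ (h:ℝ) * ((nI:ℝ)*((nI:ℝ)/(h:ℝ))*(W:ℝ)*D) :=
      mul_le_mul_of_nonneg_left (le_trans step3 h1) (le_of_lt hhR)
    have hc : (nI:ℝ)/(h:ℝ)*(h:ℝ) = (nI:ℝ) := div_mul_cancel₀ _ (ne_of_gt hhR)
    calc (h:ℝ)^3 * cs = (h:ℝ) * ((h:ℝ)^2 * cs) := by ring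
      _ ≤ (h:ℝ) * ((nI:ℝ)*((nI:ℝ)/(h:ℝ))*(W:ℝ)*D) := h2
      _ = (nI:ℝ) * ((nI:ℝ)/(h:ℝ)*(h:ℝ)) * (W:ℝ) * D := by ring
      _ = (nI:ℝ)^2*(W:ℝ)*D := by rw [hc]; ring
  have step5 : (W:ℝ)^3 * cs ≤ 27 * (nI:ℝ)^2*(W:ℝ)*D := by
    have h27 : (W:ℝ)^3 ≤ 27 * (h:ℝ)^3 := by
      have := pow_le_pow_left₀ (le_of_lt hWR) hW3hR 3
      calc (W:ℝ)^3 ≤ (3*(h:ℝ))^3 := this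
        _ = 27 * (h:ℝ)^3 := by ring
    have h27c : (W:ℝ)^3 * cs ≤ 27*(h:ℝ)^3*cs :=
      mul_le_mul_of_nonneg_right (by linarith) (le_of_lt hcs)
    have h27d : 27*((h:ℝ)^3*cs) ≤ 27*((nI:ℝ)^2*(W:ℝ)*D) := by linarith
    linarith
  have step6 : cs * (W:ℝ)^2 ≤ 27 * (nI:ℝ)^2 * D := by
    have hmul : (W:ℝ)*(cs*(W:ℝ)^2) ≤ (W:ℝ)*(27*(nI:ℝ)^2*D) := by
      calc (W:ℝ)*(cs*(W:ℝ)^2) = (W:ℝ)^3 * cs := by ring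
        _ ≤ 27 * (nI:ℝ)^2*(W:ℝ)*D := step5
        _ = (W:ℝ)*(27*(nI:ℝ)^2*D) := by ring
    exact le_of_mul_le_mul_left hmul hWR
  have hnIK : (nI:ℝ) = 2*(K:ℝ)+1 := by exact_mod_cast hnIZ
  rw [div_le_iff₀ (by positivity)]
  calc cs * (W:ℝ)^2 ≤ 27 * (nI:ℝ)^2 * D := step6
    _ = D * (27 * (2*(K:ℝ)+1)^2) := by rw [hnIK]; ring

/-- **Spectral gap for the band Dirichlet form** (Lemma 4.6): for
`𝕋 = [-(log N)⁴ W, (log N)⁴ W] ∩ ℤ` and any unit vector `u ∈ L²(𝕋)` orthogonal to the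
constants, `(1/4) ∑_{i,j ∈ 𝕋} s_{ij} (u_i - u_j)² ≥ c (log N)^{-13}`. -/
theorem band_dirichlet_spectral_gap
    (cs Cs : ℝ) (hcs : 0 < cs) (hCs : 0 < Cs) :
    ∃ c > (0:ℝ), ∃ N₀ : ℕ, ∀ N : ℕ, N₀ ≤ N → ∀ W : ℕ, 0 < W →
    2 * ((Real.log N) ^ 4 * W) < N →
    ∀ f : Fin N → ℝ, IsBandProfile W cs Cs f →
    ∀ u : Fin N → ℝ,
    (∑ i ∈ Finset.univ.filter (fun i : Fin N => zdist i ≤ (Real.log N) ^ 4 * W),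
        (u i) ^ 2) = 1 →
    (∑ i ∈ Finset.univ.filter (fun i : Fin N => zdist i ≤ (Real.log N) ^ 4 * W), u i) = 0 →
    c * (Real.log N) ^ (-(13 : ℝ)) ≤
      (1 / 4) *
        ∑ i ∈ Finset.univ.filter (fun i : Fin N => zdist i ≤ (Real.log N) ^ 4 * W),
          ∑ j ∈ Finset.univ.filter (fun j : Fin N => zdist j ≤ (Real.log N) ^ 4 * W),
            f (i - j) * (u i - u j) ^ 2 := by
  refine ⟨cs/972, by positivity, 3, ?_⟩
  intro N hN W hW hLN f hf u hu2 hu1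
  have hN3 : (3:ℝ) ≤ (N:ℝ) := by exact_mod_cast hN
  have hNpos : (0:ℝ) < (N:ℝ) := by linarith
  have hlog : (1:ℝ) ≤ Real.log N := by
    rw [Real.le_log_iff_exp_le hNpos]
    calc Real.exp 1 ≤ 2.7182818286 := le_of_lt Real.exp_one_lt_d9
      _ ≤ (N:ℝ) := by linarith
  have hlog4 : (1:ℝ) ≤ (Real.log N)^4 := one_le_pow₀ hlog
  have hWR : (1:ℝ) ≤ (W:ℝ) := by exact_mod_cast hW
  set L : ℝ := (Real.log N)^4 * W with hL
  have hWL : (W:ℝ) ≤ L := by nlinarith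
  have hL1 : (1:ℝ) ≤ L := by nlinarith
  set K : ℤ := ⌊L⌋ with hK
  have hKW : (W:ℤ) ≤ K := Int.le_floor.mpr (by exact_mod_cast hWL)
  have hKL : (K:ℝ) ≤ L := Int.floor_le L
  have hK1 : (1:ℤ) ≤ K := le_trans (by exact_mod_cast hW) hKW
  have h2KN : 2*K < (N:ℤ) := by
    have h1 : 2*(K:ℝ) < (N:ℝ) := by linarith
    exact_mod_cast h1
  obtain ⟨n, rfl⟩ : ∃ n, N = n + 1 := ⟨N - 1, by omega⟩
  set tf : ℤ → Fin (n+1) := fun x => (show Fin (n+1) from ((x : ZMod (n+1)))) with htf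
  have hval : ∀ x : ℤ, ((tf x).val : ℤ) = x % ((n:ℤ)+1) := by
    intro x
    have h2 : ((tf x).val : ℤ) = x % (((n+1:ℕ)):ℤ) := ZMod.val_intCast (n := n+1) x
    push_cast at h2
    exact h2
  have hcase : ∀ x : ℤ, -((n:ℤ)+1) < x → x ≤ (n:ℤ) →
      (((tf x).val : ℤ) = x ∨ ((tf x).val : ℤ) = x + ((n:ℤ)+1)) := by
    intro x h1 h2
    have hv := hval x
    rcases le_or_gt 0 x with hx0 | hx0
    · left
      rw [hv]
      exact Int.emod_eq_of_lt hx0 (by omega)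
    · right
      rw [hv]
      have e : x + ((n:ℤ)+1)*1 = x + ((n:ℤ)+1) := by ring
      calc x % ((n:ℤ)+1) = (x + ((n:ℤ)+1)*1) % ((n:ℤ)+1) :=
            (Int.add_mul_emod_self_left x ((n:ℤ)+1) 1).symm
        _ = x + ((n:ℤ)+1) := by
            rw [e]
            exact Int.emod_eq_of_lt (by omega) (by omega)
  have hrep : ∀ x : ℤ, -((n:ℤ)+1) < 2*x → 2*x ≤ (n:ℤ)+1 → rep (tf x) = x := by
    intro x h1 h2
    have hc := hcase x (by omega) (by omega)
    rcases hc with hc | hc <;> unfold rep <;> split_ifs with hif <;> push_cast <;> omega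
  have hrep2 : ∀ i : Fin (n+1), tf (rep i) = i := by
    intro i
    have hv := hval (rep i)
    have hiv : i.val < n+1 := i.isLt
    have hcaseI : rep i = (i.val:ℤ) ∨ rep i = (i.val:ℤ) - ((n+1:ℕ):ℤ) := by
      unfold rep
      split_ifs
      · left; rfl
      · right; rfl
    have hmod : (rep i) % ((n:ℤ)+1) = (i.val:ℤ) := by
      rcases hcaseI with hcc | hcc
      · rw [hcc]
        exact Int.emod_eq_of_lt (by positivity) (by exact_mod_cast hiv)
      · rw [hcc]
        push_cast
        have e : (i.val:ℤ) - ((n:ℤ)+1) = (i.val:ℤ) + ((n:ℤ)+1)*(-1) := by ring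
        rw [e, Int.add_mul_emod_self_left]
        exact Int.emod_eq_of_lt (by positivity) (by exact_mod_cast hiv)
    apply Fin.ext
    have h3 : ((tf (rep i)).val : ℤ) = (i.val : ℤ) := by rw [hv, hmod]
    exact_mod_cast h3
  have hsub : ∀ x y : ℤ, tf x - tf y = tf (x - y) := fun x y => (Int.cast_sub (R := ZMod (n+1)) x y).symm
  set T : Finset (Fin (n+1)) := Finset.univ.filter (fun i => zdist i ≤ L) with hT
  have hmemT : ∀ i : Fin (n+1), (i ∈ T ↔ (-K ≤ rep i ∧ rep i ≤ K)) := by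
    intro i
    rw [hT, Finset.mem_filter]
    unfold zdist
    constructor
    · rintro ⟨-, hz⟩
      have habs : |rep i| ≤ K := by
        rw [hK]
        apply Int.le_floor.mpr
        rw [Int.cast_abs]
        exact hz
      exact abs_le.mp habs
    · intro hx
      refine ⟨Finset.mem_univ _, ?_⟩
      have habs : |rep i| ≤ K := abs_le.mpr hx
      have h5 : ((|rep i| : ℤ) : ℝ) ≤ (K:ℝ) := by exact_mod_cast habs
      rw [Int.cast_abs] at h5
      linarith
  have htfmem : ∀ x : ℤ, -K ≤ x → x ≤ K → tf x ∈ T := by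
    intro x h1 h2
    rw [hmemT]
    rw [hrep x (by omega) (by omega)]
    exact ⟨h1, h2⟩
  have hbij : ∀ g : Fin (n+1) → ℝ, ∑ i ∈ T, g i = ∑ x ∈ Finset.Icc (-K) K, g (tf x) := by
    intro g
    apply Finset.sum_nbij' (i := fun i => rep i) (j := fun x => tf x)
    · intro a ha
      rw [Finset.mem_Icc]
      exact (hmemT a).mp ha
    · intro x hx
      rw [Finset.mem_Icc] at hx
      exact htfmem x hx.1 hx.2
    · intro a _
      exact hrep2 a
    · intro x hx
      rw [Finset.mem_Icc] at hx
      exact hrep x (by omega) (by omega)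
    · intro a _
      rw [hrep2 a]
  have hFlow : ∀ d : ℤ, |d| ≤ (W:ℤ) → cs / (W:ℝ) ≤ f (tf d) := by
    intro d hd
    have hdK : |d| ≤ K := le_trans hd hKW
    have hd2 := abs_le.mp hdK
    have h1 : rep (tf d) = d := hrep d (by omega) (by omega)
    apply hf.lower
    unfold zdist
    rw [h1, ← Int.cast_abs]
    exact_mod_cast hd
  have hu2' : ∑ x ∈ Finset.Icc (-K) K, (u (tf x)) ^ 2 = 1 := by
    rw [← hbij (fun i => u i ^ 2)]
    exact hu2
  have hu1' : ∑ x ∈ Finset.Icc (-K) K, u (tf x) = 0 := by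
    rw [← hbij (fun i => u i)]
    exact hu1
  have hcore := core_gap cs hcs W hW K hKW (fun x => u (tf x)) (fun d => f (tf d))
    (fun d => hf.nonneg _) hFlow hu2' hu1'
  have hDtrans : ∑ i ∈ T, ∑ j ∈ T, f (i - j) * (u i - u j)^2
      = ∑ x ∈ Finset.Icc (-K) K, ∑ y ∈ Finset.Icc (-K) K,
          f (tf (x - y)) * (u (tf x) - u (tf y))^2 := by
    rw [hbij (fun i => ∑ j ∈ T, f (i - j) * (u i - u j)^2)]
    apply Finset.sum_congr rfl
    intro x hx
    rw [hbij (fun j => f (tf x - j) * (u (tf x) - u j)^2)]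
    apply Finset.sum_congr rfl
    intro y hy
    rw [hsub x y]
  rw [hDtrans]
  set lg : ℝ := Real.log ((n+1:ℕ):ℝ) with hlg
  have hlgpos : (0:ℝ) < lg := by linarith
  have hrpow : lg ^ (-(13:ℝ)) = (lg^(13:ℕ))⁻¹ := by
    rw [show (-(13:ℝ)) = -((13:ℕ):ℝ) by norm_num, Real.rpow_neg (le_of_lt hlgpos),
      Real.rpow_natCast]
  have hKb : 2*(K:ℝ)+1 ≤ 3 * (lg^4 * (W:ℝ)) := by
    have h6 : 2*(K:ℝ)+1 ≤ 3*L := by linarith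
    rw [hL] at h6
    exact h6
  have h2K1pos : (0:ℝ) < 2*(K:ℝ)+1 := by
    have h7 : (0:ℤ) < 2*K+1 := by omega
    exact_mod_cast h7
  have hsq : (2*(K:ℝ)+1)^2 ≤ 9 * lg^8 * (W:ℝ)^2 := by
    calc (2*(K:ℝ)+1)^2 = (2*(K:ℝ)+1)*(2*(K:ℝ)+1) := sq (2*(K:ℝ)+1)
      _ ≤ (3*(lg^4*(W:ℝ)))*(3*(lg^4*(W:ℝ))) := mul_self_le_mul_self (le_of_lt h2K1pos) hKb
      _ = 9 * lg^8 * (W:ℝ)^2 := by ring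
  have hq : cs/(972 * lg^8) ≤ 1/4 * (cs * (W:ℝ)^2 / (27*(2*(K:ℝ)+1)^2)) := by
    have e1 : 1/4 * (cs * (W:ℝ)^2 / (27*(2*(K:ℝ)+1)^2))
        = cs * (W:ℝ)^2 / (108*(2*(K:ℝ)+1)^2) := by
      rw [div_mul_div_comm, one_mul]
      congr 1
      ring
    rw [e1, div_le_div_iff₀ (mul_pos (by norm_num) (pow_pos hlgpos 8))
      (mul_pos (by norm_num) (pow_pos h2K1pos 2))]
    have h9 : (2*(K:ℝ)+1)^2 * cs ≤ 9*lg^8*(W:ℝ)^2 * cs :=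
      mul_le_mul_of_nonneg_right hsq (le_of_lt hcs)
    nlinarith [h9]
  calc cs/972 * lg ^ (-(13:ℝ)) = cs/(972 * lg^13) := by
        rw [hrpow, ← div_eq_mul_inv, div_div]
    _ ≤ cs/(972 * lg^8) := by
        apply div_le_div_of_nonneg_left (le_of_lt hcs)
          (mul_pos (by norm_num) (pow_pos hlgpos 8))
        have h10 : lg^8 ≤ lg^13 := pow_le_pow_right₀ hlog (by norm_num)
        nlinarith [h10]
    _ ≤ 1/4 * (cs * (W:ℝ)^2 / (27*(2*(K:ℝ)+1)^2)) := hq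
    _ ≤ 1/4 * ∑ x ∈ Finset.Icc (-K) K, ∑ y ∈ Finset.Icc (-K) K,
          f (tf (x - y)) * (u (tf x) - u (tf y))^2 := by
        have e2 : cs * (W:ℝ)^2 / (27*(2*(K:ℝ)+1)^2) = cs * (W:ℝ)^2 / (27*(2*(K:ℝ)+1)^2) := rfl
        apply mul_le_mul_of_nonneg_left _ (by norm_num : (0:ℝ) ≤ 1/4)
        exact hcore
end
end
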